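/- arXiv:1306.2240 — 2 statements merged into one kernel-verified Lean document; each statement's English description precedes it below -/
import Mathlib

section
/- Let Γ be a group and j, ρ : Γ → G₀ homomorphisms such that the action of Γ on ℍ² via j is properly discontinuous. Suppose f : ℍ² → ℍ² is a K-Lipschitz map with K < 1 that is (j,ρ)-equivariant, i.e. f(j(γ)·p) = ρ(γ)·f(p) for all γ ∈ Γ, p ∈ ℍ². Then: (i) for every g ∈ G₀ there is a unique point Π(g) ∈ ℍ² with f(Π(g)) = g·Π(g); (ii) the map Π : G₀ → ℍ² is continuous and surjective; (iii) Π(ρ(γ)·g·j(γ)⁻¹) = j(γ)·Π(g) for all γ ∈ Γ and g ∈ G₀; (iv) the action of Γ on G₀ given by γ·g := ρ(γ)·g·j(γ)⁻¹ is properly discontinuous. (Thus the fibers Π⁻¹(p) = {g ∈ G₀ : g·p = f(p)}, which are timelike geodesic circles of anti-de Sitter space G₀, form an equivariant fibration of G₀ over ℍ².) -/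
noncomputable section

/-- Minkowski space `ℝ^{2,1}` as `Fin 3 → ℝ`. -/
abbrev V : Type := Fin 3 → ℝ

/-- The Minkowski form `⟨x|y⟩ = x₁y₁ + x₂y₂ − x₃y₃`. -/
def mink (x y : V) : ℝ := x 0 * y 0 + x 1 * y 1 - x 2 * y 2

/-- The Minkowski cross product. -/
def mcross (x y : V) : V :=
  ![x 1 * y 2 - x 2 * y 1, x 2 * y 0 - x 0 * y 2, -(x 0 * y 1) + x 1 * y 0]

/-- The hyperbolic plane: upper sheet of the hyperboloid. -/
def H2 : Set V := {p | mink p p = -1 ∧ 0 < p 2}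

/-- Inverse hyperbolic cosine. -/
def acosh (x : ℝ) : ℝ := Real.log (x + Real.sqrt (x ^ 2 - 1))

/-- Hyperbolic distance. -/
def hdist (p q : V) : ℝ := acosh (-(mink p q))

/-- Norm of a (spacelike) tangent vector. -/
def mnorm (x : V) : ℝ := Real.sqrt (mink x x)

/-- The point `exp_p(t x)`. -/
def mexp (p x : V) (t : ℝ) : V :=
  if x = 0 then p
  else Real.cosh (t * mnorm x) • p + (Real.sinh (t * mnorm x) / mnorm x) • x

/-- `d'(x_p, x_q)`: the derivative at `t = 0` of `t ↦ d(exp_p(t x_p), exp_q(t x_q))`. -/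
def dprime (p xp q xq : V) : ℝ :=
  deriv (fun t => hdist (mexp p xp t) (mexp q xq t)) 0

/-- A convex field on `ℍ²`. -/
def IsConvexField (X : Set (V × V)) : Prop :=
  IsClosed X ∧ (∀ px ∈ X, px.1 ∈ H2 ∧ mink px.2 px.1 = 0) ∧
    ∀ p : V, Convex ℝ {x : V | (p, x) ∈ X}

/-- The fiber `X(p)` of a convex field. -/
def fiberAt (X : Set (V × V)) (p : V) : Set V := {x | (p, x) ∈ X}

/-- A convex field is defined over `A` if all fibers over `A` are nonempty. -/
def DefinedOver (X : Set (V × V)) (A : Set V) : Prop := ∀ p ∈ A, (fiberAt X p).Nonempty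

/-- A convex field is `k`-lipschitz. -/
def LipschitzField (k : ℝ) (X : Set (V × V)) : Prop :=
  ∀ p xp q xq, (p, xp) ∈ X → (q, xq) ∈ X → p ≠ q → dprime p xp q xq ≤ k * hdist p q

/-- A (continuous) vector field on `ℍ²`. -/
def IsVectorField (X : V → V) : Prop := ContinuousOn X H2 ∧ ∀ p ∈ H2, mink (X p) p = 0

/-- A vector field is `k`-lipschitz. -/
def LipschitzVF (k : ℝ) (X : V → V) : Prop :=
  ∀ p ∈ H2, ∀ q ∈ H2, p ≠ q → dprime p (X p) q (X q) ≤ k * hdist p q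

/-- Hyperbolic convexity of a subset of `ℍ²`. -/
def HConvex (C : Set V) : Prop :=
  ∀ p ∈ C, ∀ q ∈ C, ∀ m ∈ H2, hdist p m + hdist m q = hdist p q → m ∈ C

/-- Hyperbolic convex hull. -/
def hconvexHull (A : Set V) : Set V := ⋂₀ {C : Set V | A ⊆ C ∧ C ⊆ H2 ∧ HConvex C}

/-- Interior of a subset of `ℍ²` relative to `ℍ²`. -/
def relInterior (A : Set V) : Set V :=
  {p | p ∈ H2 ∧ ∃ O : Set V, IsOpen O ∧ p ∈ O ∧ O ∩ H2 ⊆ A}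

/-- Linear automorphisms of `ℝ³`, a group under composition. -/
abbrev GL3 : Type := V ≃ₗ[ℝ] V

/-- Membership in `G₀`: preserves the Minkowski form, determinant one, preserves `ℍ²`. -/
def InG0 (g : GL3) : Prop :=
  (∀ x y : V, mink (g x) (g y) = mink x y) ∧
    LinearMap.det g.toLinearMap = 1 ∧ ∀ p ∈ H2, g p ∈ H2

/-- Properly discontinuous action on (a subset of) a topological space. -/
def ProperlyDiscOn {Γ α : Type*} [TopologicalSpace α] (act : Γ → α → α) (S : Set α) : Prop :=
  ∀ K L : Set α, K ⊆ S → L ⊆ S → IsCompact K → IsCompact L →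
    {γ : Γ | (act γ '' K ∩ L).Nonempty}.Finite

/-- A `j`-cocycle. -/
def IsCocycle {Γ : Type*} [Group Γ] (j : Γ →* GL3) (u : Γ → V) : Prop :=
  ∀ γ₁ γ₂ : Γ, u (γ₁ * γ₂) = u γ₁ + j γ₁ (u γ₂)

/-- Convex cocompact homomorphism. -/
def ConvexCocompact {Γ : Type*} [Group Γ] (j : Γ →* GL3) : Prop :=
  Function.Injective j ∧
    ProperlyDiscOn (fun (γ : Γ) (p : V) => j γ p) H2 ∧
    ∃ C K : Set V, C.Nonempty ∧ IsClosed C ∧ C ⊆ H2 ∧ HConvex C ∧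
      (∀ γ : Γ, j γ '' C = C) ∧ IsCompact K ∧ C ⊆ ⋃ γ : Γ, j γ '' K

/-- The convex core of `j`. -/
def ConvexCore {Γ : Type*} [Group Γ] (j : Γ →* GL3) : Set V :=
  ⋂₀ {C : Set V | C.Nonempty ∧ IsClosed C ∧ C ⊆ H2 ∧ HConvex C ∧ ∀ γ : Γ, j γ '' C = C}

/-- `(j,u)`-equivariance of a convex field. -/
def EquivField {Γ : Type*} [Group Γ] (j : Γ →* GL3) (u : Γ → V) (X : Set (V × V)) : Prop :=
  ∀ (γ : Γ), ∀ p ∈ H2,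
    fiberAt X (j γ p) = (fun x => j γ x + mcross (u γ) (j γ p)) '' fiberAt X p

/-- `(j,u)`-equivariance of a vector field. -/
def EquivVF {Γ : Type*} [Group Γ] (j : Γ →* GL3) (u : Γ → V) (X : V → V) : Prop :=
  ∀ (γ : Γ), ∀ p ∈ H2, X (j γ p) = j γ (X p) + mcross (u γ) (j γ p)

/-- Translation length `λ(g) = inf_{p ∈ ℍ²} d(p, g·p)`. -/
def transLength (g : V → V) : ℝ := sInf ((fun p => hdist p (g p)) '' H2)

/-- A transformation is hyperbolic if its translation length is positive. -/
def IsHyperbolic (g : V → V) : Prop := 0 < transLength g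

/-- `cross(v)` as a linear map `w ↦ v ∧ w`. -/
def crossLM (v : V) : V →ₗ[ℝ] V where
  toFun w := mcross v w
  map_add' w₁ w₂ := by
    funext i
    fin_cases i <;>
      simp [mcross, Pi.add_apply] <;> ring
  map_smul' c w := by
    funext i
    fin_cases i <;>
      simp [mcross, Pi.smul_apply, smul_eq_mul] <;> ring

/-- `cross(v)` as a continuous linear map. -/
def crossCLM (v : V) : V →L[ℝ] V := LinearMap.toContinuousLinearMap (crossLM v)

/-- A geodesic line of `ℍ²`. -/
def IsGeodesicLine (ℓ : Set V) : Prop :=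
  ∃ a ∈ H2, ∃ b ∈ H2, a ≠ b ∧ ℓ = {m ∈ H2 | mink m (mcross a b) = 0}

/-- A `j(Γ)`-invariant geodesic lamination in the convex core. -/
def IsLamination {Γ : Type*} [Group Γ] (j : Γ →* GL3) (L : Set (Set V)) : Prop :=
  L.Nonempty ∧
  (∀ ℓ ∈ L, IsGeodesicLine ℓ ∧ ℓ ⊆ ConvexCore j) ∧
  (∀ ℓ₁ ∈ L, ∀ ℓ₂ ∈ L, ℓ₁ ≠ ℓ₂ → ℓ₁ ∩ ℓ₂ = ∅) ∧
  IsClosed (⋃₀ L) ∧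
  ∀ (γ : Γ), ∀ ℓ ∈ L, j γ '' ℓ ∈ L

/-- The geodesic flow on the tangent bundle. -/
def gflow (t : ℝ) (px : V × V) : V × V :=
  if px.2 = 0 then px
  else (mexp px.1 px.2 t,
    (mnorm px.2 * Real.sinh (t * mnorm px.2)) • px.1 + Real.cosh (t * mnorm px.2) • px.2)

/-- Parallel transport from `p` to `q` along the geodesic. -/
def ptransport (p q x : V) : V := x + (mink x q / (1 - mink p q)) • (p + q)


/-- We topologize `GL3` (hence its subset `G₀`, a model of anti-de Sitter space) via the
embedding into `V → V`, i.e. as a subgroup of `GL₃(ℝ)`. -/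
instance : TopologicalSpace GL3 :=
  TopologicalSpace.induced (fun g : GL3 => (⇑g : V → V)) inferInstance


/-! ### Auxiliary lemmas -/

section Aux

lemma mink_comm' (p q : V) : mink p q = mink q p := by simp only [mink]; ring

lemma p2_ge_one {p : V} (hp : p ∈ H2) : 1 ≤ p 2 := by
  obtain ⟨h1, h2⟩ := hp
  simp only [mink] at h1
  nlinarith [sq_nonneg (p 0), sq_nonneg (p 1)]

lemma cs_ge_one {p q : V} (hp : p ∈ H2) (hq : q ∈ H2) : 1 ≤ -(mink p q) := by
  obtain ⟨h1, h2⟩ := hp; obtain ⟨k1, k2⟩ := hq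
  simp only [mink] at *
  nlinarith [sq_nonneg (p 0 - q 0), sq_nonneg (p 1 - q 1), sq_nonneg (p 0 * q 1 - p 1 * q 0),
    mul_pos h2 k2, sq_nonneg (p 2 - q 2), sq_nonneg (p 2 * q 2 - 1)]

lemma third_lt {p q : V} (hp : p ∈ H2) (hq : q ∈ H2) : q 2 < 2 * (-(mink p q)) * p 2 := by
  obtain ⟨h1, h2⟩ := hp; obtain ⟨k1, k2⟩ := hq
  have hp1 : 1 ≤ p 2 := p2_ge_one ⟨h1, h2⟩
  have hq1 : 1 ≤ q 2 := p2_ge_one ⟨k1, k2⟩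
  simp only [mink] at *
  nlinarith [sq_nonneg (p 0 * q 1 - p 1 * q 0), sq_nonneg (p 0 * q 2 - p 2 * q 0),
    sq_nonneg (p 1 * q 2 - p 2 * q 1), mul_pos h2 k2,
    sq_nonneg (2 * p 2 ^ 2 * q 2 - q 2 - 2 * p 2 * (p 0 * q 0 + p 1 * q 1))]

lemma coord3_diff {p q : V} (hp : p ∈ H2) (hq : q ∈ H2) :
    (p 2 - q 2) ^ 2 ≤ 2 * (-(mink p q) - 1) * (p 2 * q 2) := by
  obtain ⟨h1, h2⟩ := hp; obtain ⟨k1, k2⟩ := hq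
  simp only [mink] at *
  nlinarith [sq_nonneg (p 0 * q 1 - p 1 * q 0), sq_nonneg (p 0 * q 2 - p 2 * q 0),
    sq_nonneg (p 1 * q 2 - p 2 * q 1), mul_pos h2 k2, sq_nonneg (p 0 - q 0), sq_nonneg (p 1 - q 1),
    sq_nonneg (p 0 + q 0), sq_nonneg (p 1 + q 1), sq_nonneg (p 2 - q 2)]

lemma euclid_sq {p q : V} (hp : p ∈ H2) (hq : q ∈ H2) :
    (p 0 - q 0) ^ 2 + (p 1 - q 1) ^ 2 + (p 2 - q 2) ^ 2
      = 2 * (-(mink p q) - 1) + 2 * (p 2 - q 2) ^ 2 := by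
  obtain ⟨h1, h2⟩ := hp; obtain ⟨k1, k2⟩ := hq
  simp only [mink] at *
  nlinarith [sq_nonneg (p 0 - q 0)]

lemma eq_of_cs_eq_one {p q : V} (hp : p ∈ H2) (hq : q ∈ H2) (h : -(mink p q) = 1) : p = q := by
  have h3 := coord3_diff hp hq
  have h4 := euclid_sq hp hq
  rw [h] at h3 h4
  simp only [sub_self] at h3 h4
  have e2 : p 2 = q 2 := by nlinarith [sq_nonneg (p 2 - q 2)]
  have e0 : p 0 = q 0 := by
    nlinarith [sq_nonneg (p 0 - q 0), sq_nonneg (p 1 - q 1), sq_nonneg (p 2 - q 2)]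
  have e1 : p 1 = q 1 := by
    nlinarith [sq_nonneg (p 0 - q 0), sq_nonneg (p 1 - q 1), sq_nonneg (p 2 - q 2)]
  funext i; fin_cases i <;> assumption

/-! ### acosh lemmas -/

lemma sqrt_sq_sub_one {x : ℝ} (hx : 1 ≤ x) : Real.sqrt (x ^ 2 - 1) ^ 2 = x ^ 2 - 1 :=
  Real.sq_sqrt (by nlinarith)

lemma acosh_arg_pos {x : ℝ} (hx : 1 ≤ x) : 0 < x + Real.sqrt (x ^ 2 - 1) := by
  have := Real.sqrt_nonneg (x ^ 2 - 1); linarith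

lemma acosh_arg_ge_one {x : ℝ} (hx : 1 ≤ x) : 1 ≤ x + Real.sqrt (x ^ 2 - 1) := by
  have := Real.sqrt_nonneg (x ^ 2 - 1); linarith

lemma acosh_nonneg {x : ℝ} (hx : 1 ≤ x) : 0 ≤ acosh x :=
  Real.log_nonneg (acosh_arg_ge_one hx)

lemma exp_acosh {x : ℝ} (hx : 1 ≤ x) : Real.exp (acosh x) = x + Real.sqrt (x ^ 2 - 1) :=
  Real.exp_log (acosh_arg_pos hx)

lemma exp_neg_acosh {x : ℝ} (hx : 1 ≤ x) : Real.exp (-acosh x) = x - Real.sqrt (x ^ 2 - 1) := by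
  rw [Real.exp_neg, exp_acosh hx]
  have hs := sqrt_sq_sub_one hx
  have hpos := acosh_arg_pos hx
  have hmul : (x + Real.sqrt (x ^ 2 - 1)) * (x - Real.sqrt (x ^ 2 - 1)) = 1 := by nlinarith
  field_simp
  nlinarith

lemma cosh_acosh {x : ℝ} (hx : 1 ≤ x) : Real.cosh (acosh x) = x := by
  rw [Real.cosh_eq, exp_acosh hx, exp_neg_acosh hx]; ring

lemma sinh_acosh {x : ℝ} (hx : 1 ≤ x) : Real.sinh (acosh x) = Real.sqrt (x ^ 2 - 1) := by
  rw [Real.sinh_eq, exp_acosh hx, exp_neg_acosh hx]; ring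

lemma acosh_cosh {t : ℝ} (ht : 0 ≤ t) : acosh (Real.cosh t) = t := by
  unfold acosh
  have h1 : Real.cosh t ^ 2 - 1 = Real.sinh t ^ 2 := by
    have := Real.cosh_sq_sub_sinh_sq t; linarith
  rw [h1, Real.sqrt_sq (Real.sinh_nonneg_iff.2 ht), Real.cosh_add_sinh, Real.log_exp]

lemma acosh_le_of_le_cosh {x t : ℝ} (hx : 1 ≤ x) (ht : 0 ≤ t) (h : x ≤ Real.cosh t) :
    acosh x ≤ t := by
  by_contra hlt
  push_neg at hlt
  have h2 : Real.cosh t < Real.cosh (acosh x) :=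
    Real.cosh_lt_cosh.2 (by rw [abs_of_nonneg ht, abs_of_nonneg (acosh_nonneg hx)]; exact hlt)
  rw [cosh_acosh hx] at h2; linarith

lemma acosh_eq_one_of {x : ℝ} (hx : 1 ≤ x) (h : acosh x = 0) : x = 1 := by
  have : Real.cosh (acosh x) = Real.cosh 0 := by rw [h]
  rw [cosh_acosh hx, Real.cosh_zero] at this; exact this

lemma acosh_le_sub_add {x : ℝ} (hx : 1 ≤ x) : acosh x ≤ (x - 1) + Real.sqrt (x ^ 2 - 1) := by
  have := Real.log_le_sub_one_of_pos (acosh_arg_pos hx)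
  unfold acosh; linarith

lemma acosh_one : acosh 1 = 0 := by unfold acosh; norm_num

/-! ### the Gram determinant and the triangle inequality -/

lemma gram_identity (p q r : V) :
    mink p p * mink q q * mink r r + 2 * mink p q * mink p r * mink q r
      - mink p p * mink q r ^ 2 - mink q q * mink p r ^ 2 - mink r r * mink p q ^ 2
    = -(p 0 * (q 1 * r 2 - q 2 * r 1) - p 1 * (q 0 * r 2 - q 2 * r 0)
        + p 2 * (q 0 * r 1 - q 1 * r 0)) ^ 2 := by
  simp only [mink]; ring

lemma hdist_triangle {p q r : V} (hp : p ∈ H2) (hq : q ∈ H2) (hr : r ∈ H2) :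
    hdist p r ≤ hdist p q + hdist q r := by
  set α := -(mink p q) with hα
  set β := -(mink q r) with hβ
  set γ := -(mink p r) with hγ
  have hα1 : 1 ≤ α := cs_ge_one hp hq
  have hβ1 : 1 ≤ β := cs_ge_one hq hr
  have hγ1 : 1 ≤ γ := cs_ge_one hp hr
  have key : (γ - α * β) ^ 2 ≤ (α ^ 2 - 1) * (β ^ 2 - 1) := by
    have hg := gram_identity p q r
    obtain ⟨e1, _⟩ := hp; obtain ⟨e2, _⟩ := hq; obtain ⟨e3, _⟩ := hr
    have hpq : mink p q = -α := by rw [hα]; ring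
    have hqr : mink q r = -β := by rw [hβ]; ring
    have hpr : mink p r = -γ := by rw [hγ]; ring
    rw [e1, e2, e3, hpq, hqr, hpr] at hg
    nlinarith [hg, sq_nonneg (p 0 * (q 1 * r 2 - q 2 * r 1) - p 1 * (q 0 * r 2 - q 2 * r 0)
        + p 2 * (q 0 * r 1 - q 1 * r 0))]
  have hcosh : Real.cosh (acosh α + acosh β)
      = α * β + Real.sqrt (α ^ 2 - 1) * Real.sqrt (β ^ 2 - 1) := by
    rw [Real.cosh_add, cosh_acosh hα1, cosh_acosh hβ1, sinh_acosh hα1, sinh_acosh hβ1]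
  have hle : γ ≤ Real.cosh (acosh α + acosh β) := by
    rw [hcosh]
    rcases le_or_gt γ (α * β) with h | h
    · nlinarith [Real.sqrt_nonneg (α ^ 2 - 1), Real.sqrt_nonneg (β ^ 2 - 1),
        mul_nonneg (Real.sqrt_nonneg (α ^ 2 - 1)) (Real.sqrt_nonneg (β ^ 2 - 1))]
    · have h2 : γ - α * β ≤ Real.sqrt ((α ^ 2 - 1) * (β ^ 2 - 1)) := by
        rw [show γ - α * β = Real.sqrt ((γ - α * β) ^ 2) by
          rw [Real.sqrt_sq (by linarith)]]
        exact Real.sqrt_le_sqrt key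
      rw [← Real.sqrt_mul (by nlinarith)]; linarith
  exact acosh_le_of_le_cosh hγ1
    (add_nonneg (acosh_nonneg hα1) (acosh_nonneg hβ1)) hle

/-! ### `H2` as a complete metric space -/

lemma hdist_self {p : V} (hp : p ∈ H2) : hdist p p = 0 := by
  unfold hdist; rw [hp.1]; norm_num; exact acosh_one

lemma hdist_nonneg' {p q : V} (hp : p ∈ H2) (hq : q ∈ H2) : 0 ≤ hdist p q :=
  acosh_nonneg (cs_ge_one hp hq)

lemma cs_le_cosh {p q : V} (hp : p ∈ H2) (hq : q ∈ H2) {t : ℝ} (ht : 0 ≤ t)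
    (h : hdist p q ≤ t) : -(mink p q) ≤ Real.cosh t := by
  have h1 := cs_ge_one hp hq
  calc -(mink p q) = Real.cosh (acosh (-(mink p q))) := (cosh_acosh h1).symm
    _ ≤ Real.cosh t := Real.cosh_le_cosh.2 (by
        rw [abs_of_nonneg ht, abs_of_nonneg (acosh_nonneg h1)]; exact h)

structure H2S where
  val : V
  prop : val ∈ H2

lemma H2S.ext' {p q : H2S} (h : p.val = q.val) : p = q := by
  cases p; cases q; simpa using h

instance : MetricSpace H2S where
  dist p q := hdist p.val q.val
  dist_self p := hdist_self p.prop
  dist_comm p q := by show hdist p.val q.val = hdist q.val p.val; unfold hdist; rw [mink_comm']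
  dist_triangle p q r := hdist_triangle p.prop q.prop r.prop
  eq_of_dist_eq_zero := by
    intro p q h
    have h1 := cs_ge_one p.prop q.prop
    exact H2S.ext' (eq_of_cs_eq_one p.prop q.prop (acosh_eq_one_of h1 h))

lemma H2S.dist_eq (p q : H2S) : dist p q = hdist p.val q.val := rfl

instance : Nonempty H2S :=
  ⟨⟨![0, 0, 1], by constructor <;> simp [mink, Matrix.cons_val_zero, Matrix.cons_val_one]⟩⟩

lemma mink_continuous2 : Continuous fun v : V × V => mink v.1 v.2 := by
  unfold mink; fun_prop

instance : CompleteSpace H2S := by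
  apply Metric.complete_of_cauchySeq_tendsto
  intro u hu
  obtain ⟨R, hR, hRb⟩ := cauchySeq_bdd hu
  set c := (u 0).val 2 with hc
  have hcp : 0 < c := (u 0).prop.2
  set M : ℝ := 2 * Real.cosh R * c with hM
  have hM1 : 1 ≤ M := by
    have := p2_ge_one (u 0).prop
    nlinarith [Real.one_le_cosh R]
  have hbound : ∀ n i, |(u n).val i| ≤ M := by
    intro n i
    have h3 : (u n).val 2 ≤ M := by
      have := third_lt (u 0).prop (u n).prop
      have hcs := cs_le_cosh (u 0).prop (u n).prop hR.le (le_of_lt (hRb 0 n))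
      have := p2_ge_one (u 0).prop
      nlinarith [Real.cosh_pos (x := R), cs_ge_one (u 0).prop (u n).prop]
    have hsq : (u n).val i ^ 2 ≤ (u n).val 2 ^ 2 := by
      obtain ⟨h1, _⟩ := (u n).prop
      simp only [mink] at h1
      have k0 : (u n).val 0 ^ 2 ≤ (u n).val 2 ^ 2 := by nlinarith [sq_nonneg ((u n).val 1)]
      have k1 : (u n).val 1 ^ 2 ≤ (u n).val 2 ^ 2 := by nlinarith [sq_nonneg ((u n).val 0)]
      have k2 : (u n).val 2 ^ 2 ≤ (u n).val 2 ^ 2 := le_refl _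
      fin_cases i
      · exact k0
      · exact k1
      · exact k2
    have h2p := p2_ge_one (u n).prop
    have : |(u n).val i| ≤ (u n).val 2 := by
      rw [abs_le]; constructor <;> nlinarith [abs_nonneg ((u n).val i), sq_abs ((u n).val i)]
    linarith
  have hin : ∀ n, (fun n => (u n).val) n ∈ Metric.closedBall (0 : V) M := by
    intro n
    rw [Metric.mem_closedBall, dist_zero_right]
    rw [pi_norm_le_iff_of_nonneg (by linarith)]
    intro i; rw [Real.norm_eq_abs]; exact hbound n i
  obtain ⟨a, _, φ, hφ, hconv⟩ :=
    (isCompact_closedBall (0 : V) M).tendsto_subseq hin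
  have hconv' : ∀ i, Filter.Tendsto (fun k => (u (φ k)).val i) Filter.atTop (nhds (a i)) := by
    intro i
    exact ((continuous_apply i).tendsto a).comp hconv
  have ha : a ∈ H2 := by
    constructor
    · have : Filter.Tendsto (fun k => mink (u (φ k)).val (u (φ k)).val) Filter.atTop
          (nhds (mink a a)) := by
        exact (mink_continuous2.tendsto (a, a)).comp (hconv.prodMk_nhds hconv)
      have h2 : (fun k => mink (u (φ k)).val (u (φ k)).val) = fun _ => (-1 : ℝ) := by
        funext k; exact (u (φ k)).prop.1
      rw [h2] at this
      exact (tendsto_nhds_unique this tendsto_const_nhds)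
    · have : (1 : ℝ) ≤ a 2 := by
        apply le_of_tendsto_of_tendsto tendsto_const_nhds (hconv' 2)
        filter_upwards with k using p2_ge_one (u (φ k)).prop
      linarith
  refine ⟨⟨a, ha⟩, tendsto_nhds_of_cauchySeq_of_subseq hu hφ.tendsto_atTop ?_⟩
  rw [tendsto_iff_dist_tendsto_zero]
  have hx : Filter.Tendsto (fun k => -(mink (u (φ k)).val a)) Filter.atTop (nhds 1) := by
    have := (mink_continuous2.tendsto (a, a)).comp (hconv.prodMk_nhds tendsto_const_nhds)
    have h2 : -(mink a a) = 1 := by rw [ha.1]; ring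
    simpa [h2] using this.neg
  apply squeeze_zero
  · intro k; exact hdist_nonneg' (u (φ k)).prop ha
  · intro k
    exact acosh_le_sub_add (cs_ge_one (u (φ k)).prop ha)
  · have h1 : Filter.Tendsto (fun k => (-(mink (u (φ k)).val a) - 1)) Filter.atTop (nhds 0) := by
      simpa using hx.sub_const 1
    have h2 : Filter.Tendsto (fun k => Real.sqrt ((-(mink (u (φ k)).val a)) ^ 2 - 1))
        Filter.atTop (nhds 0) := by
      have : Filter.Tendsto (fun k => (-(mink (u (φ k)).val a)) ^ 2 - 1) Filter.atTop
          (nhds 0) := by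
        have := (hx.pow 2).sub_const 1
        simpa using this
      simpa [Function.comp_def] using (Real.continuous_sqrt.tendsto 0).comp this
    simpa using h1.add h2

/-! ### group lemmas for `G₀` -/

lemma gl3_mul_apply (g h : GL3) (x : V) : (g * h) x = g (h x) := rfl
lemma gl3_inv_apply (g : GL3) (x : V) : (g⁻¹ : GL3) x = g.symm x := rfl

lemma mink_neg_self (p : V) : mink (-p) (-p) = mink p p := by simp [mink]

lemma H2_neg_of {q : V} (h1 : mink q q = -1) (h2 : q 2 < 0) : -q ∈ H2 := by
  refine ⟨by rw [mink_neg_self]; exact h1, ?_⟩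
  simp only [Pi.neg_apply]; linarith

lemma InG0.mul {g h : GL3} (hg : InG0 g) (hh : InG0 h) : InG0 (g * h) := by
  obtain ⟨hg1, hg2, hg3⟩ := hg; obtain ⟨hh1, hh2, hh3⟩ := hh
  refine ⟨fun x y => by rw [gl3_mul_apply, gl3_mul_apply, hg1, hh1], ?_, ?_⟩
  · rw [LinearEquiv.coe_toLinearMap_mul]
    show LinearMap.det (g.toLinearMap ∘ₗ h.toLinearMap) = 1
    rw [LinearMap.det_comp, hg2, hh2]; norm_num
  · intro p hp; rw [gl3_mul_apply]; exact hg3 _ (hh3 p hp)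

lemma InG0.inv {g : GL3} (hg : InG0 g) : InG0 g⁻¹ := by
  obtain ⟨hg1, hg2, hg3⟩ := hg
  have hform : ∀ x y : V, mink ((g⁻¹ : GL3) x) ((g⁻¹ : GL3) y) = mink x y := by
    intro x y
    have h := hg1 (g.symm x) (g.symm y)
    rw [g.apply_symm_apply, g.apply_symm_apply] at h
    simpa [gl3_inv_apply] using h.symm
  refine ⟨hform, ?_, ?_⟩
  · have h := g.det_mul_det_symm
    rw [hg2, one_mul] at h
    exact h
  · intro p hp
    set q := (g⁻¹ : GL3) p with hqd
    have h1 : mink q q = -1 := by rw [hform]; exact hp.1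
    rcases lt_trichotomy (q 2) 0 with h | h | h
    · exfalso
      have hneg : -q ∈ H2 := H2_neg_of h1 h
      have hH := (hg3 _ hneg).2
      have happ : g (-q) = -p := by
        rw [map_neg, hqd, gl3_inv_apply, g.apply_symm_apply]
      rw [happ] at hH
      simp only [Pi.neg_apply] at hH
      linarith [hp.2]
    · exfalso; simp only [mink] at h1; rw [h] at h1; nlinarith [sq_nonneg (q 0), sq_nonneg (q 1)]
    · exact ⟨h1, h⟩

lemma InG0.hdist_eq {g : GL3} (hg : InG0 g) (p q : V) : hdist (g p) (g q) = hdist p q := by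
  unfold hdist; rw [hg.1]

/-! ### reflections and transitivity -/

def reflLM (m : V) : V →ₗ[ℝ] V where
  toFun x := fun i => -(x i) - 2 * mink x m * m i
  map_add' x y := by funext i; simp [mink]; ring
  map_smul' c x := by funext i; simp [mink]; ring

lemma reflLM_invol {m : V} (hm : mink m m = -1) (x : V) : reflLM m (reflLM m x) = x := by
  funext i
  simp only [reflLM, LinearMap.coe_mk, AddHom.coe_mk, mink] at *
  linear_combination (4 * (x 0 * m 0 + x 1 * m 1 - x 2 * m 2) * m i) * hm

def reflE (m : V) (hm : mink m m = -1) : GL3 :=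
  LinearEquiv.ofLinear (reflLM m) (reflLM m)
    (LinearMap.ext (reflLM_invol hm)) (LinearMap.ext (reflLM_invol hm))

lemma reflE_apply (m : V) (hm : mink m m = -1) (x : V) :
    reflE m hm x = fun i => -(x i) - 2 * mink x m * m i := rfl

lemma reflE_det (m : V) (hm : mink m m = -1) :
    LinearMap.det (reflE m hm).toLinearMap = 1 := by
  rw [show (reflE m hm).toLinearMap = reflLM m from rfl]
  rw [← LinearMap.det_toMatrix']
  rw [Matrix.det_fin_three]
  simp only [LinearMap.toMatrix'_apply, reflLM, LinearMap.coe_mk, AddHom.coe_mk, mink]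
  norm_num [Fin.ext_iff]
  simp only [mink] at hm
  linear_combination (-2 : ℝ) * hm

lemma reflE_form (m : V) (hm : mink m m = -1) (x y : V) :
    mink (reflE m hm x) (reflE m hm y) = mink x y := by
  have hm' : m 0 * m 0 + m 1 * m 1 - m 2 * m 2 = -1 := hm
  simp only [reflE_apply, mink]
  linear_combination (4 * (x 0 * m 0 + x 1 * m 1 - x 2 * m 2)
    * (y 0 * m 0 + y 1 * m 1 - y 2 * m 2)) * hm'

lemma reflE_InG0 {m : V} (hm : m ∈ H2) : InG0 (reflE m hm.1) := by
  refine ⟨reflE_form m hm.1, reflE_det m hm.1, ?_⟩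
  intro x hx
  refine ⟨by rw [reflE_form]; exact hx.1, ?_⟩
  have h3 := third_lt hm hx
  have hh : reflE m hm.1 x 2 = 2 * (-(mink x m)) * m 2 - x 2 := by
    rw [reflE_apply]; ring
  rw [hh, mink_comm' x m]
  linarith

lemma transitive_H2 {p q : V} (hp : p ∈ H2) (hq : q ∈ H2) :
    ∃ g : GL3, InG0 g ∧ g p = q := by
  set α := -(mink p q) with hα
  have hα1 : 1 ≤ α := cs_ge_one hp hq
  set s := Real.sqrt (2 + 2 * α) with hs
  have hs2 : s ^ 2 = 2 + 2 * α := Real.sq_sqrt (by linarith)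
  have hspos : 0 < s := Real.sqrt_pos.2 (by linarith)
  set m : V := s⁻¹ • (p + q) with hmdef
  have hmi : ∀ i, m i = s⁻¹ * (p i + q i) := fun i => rfl
  have hm2 : 0 < m 2 := by
    rw [hmi]
    have := hp.2; have := hq.2
    positivity
  have hss : s⁻¹ * s = 1 := inv_mul_cancel₀ hspos.ne'
  have e1 := hp.1
  have e2 := hq.1
  have hα' : α = -(p 0 * q 0 + p 1 * q 1 - p 2 * q 2) := hα
  simp only [mink] at e1 e2
  have hmm : mink m m = -1 := by
    simp only [mink, hmi]
    linear_combination (s⁻¹ * s⁻¹) * e1 + (s⁻¹ * s⁻¹) * e2 + (2 * s⁻¹ * s⁻¹) * hα'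
      + (s⁻¹ * s⁻¹) * hs2 - (s⁻¹ * s + 1) * hss
  have hmH2 : m ∈ H2 := ⟨hmm, hm2⟩
  refine ⟨reflE m hmm * reflE p hp.1, InG0.mul (reflE_InG0 hmH2) (reflE_InG0 hp), ?_⟩
  rw [gl3_mul_apply]
  have hfix : reflE p hp.1 p = p := by
    funext i
    rw [reflE_apply]
    simp only [hp.1]; ring
  rw [hfix]
  funext i
  rw [reflE_apply]
  simp only [mink, hmi]
  linear_combination (-2 * (s⁻¹ * s⁻¹) * (p i + q i)) * e1
    + (-2 * (s⁻¹ * s⁻¹) * (p i + q i)) * hα'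
    + (-(s⁻¹ * s⁻¹) * (p i + q i)) * hs2
    + ((p i + q i) * (s⁻¹ * s + 1)) * hss

end Aux


/-! ### more auxiliary lemmas: coordinates, inverse entries, fixed points -/

section Aux2

lemma coord_bound {p q : V} (hp : p ∈ H2) (hq : q ∈ H2) {t : ℝ} (ht : 0 ≤ t)
    (hd : hdist p q ≤ t) (i : Fin 3) :
    (q i - p i) ^ 2 ≤ 2 * (Real.cosh t - 1) * (1 + 4 * Real.cosh t * (p 2) ^ 2) := by
  have hα1 : 1 ≤ -(mink p q) := cs_ge_one hp hq
  have hαc : -(mink p q) ≤ Real.cosh t := cs_le_cosh hp hq ht hd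
  have h4 := euclid_sq hp hq
  have h3 := coord3_diff hp hq
  have h5 := third_lt hp hq
  have hp2 := p2_ge_one hp
  have hq2 := p2_ge_one hq
  have hC1 : (1 : ℝ) ≤ Real.cosh t := Real.one_le_cosh t
  have hprod : 0 ≤ (-(mink p q) - 1) * (p 2) * (2 * (-(mink p q)) * p 2 - q 2) :=
    mul_nonneg (mul_nonneg (by linarith) (by linarith)) (by linarith)
  have hmono : 0 ≤ (Real.cosh t - (-(mink p q))) * (Real.cosh t + (-(mink p q)) - 1) :=
    mul_nonneg (by linarith) (by linarith)
  have hsum : (p 0 - q 0) ^ 2 + (p 1 - q 1) ^ 2 + (p 2 - q 2) ^ 2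
      ≤ 2 * (Real.cosh t - 1) * (1 + 4 * Real.cosh t * (p 2) ^ 2) := by
    nlinarith [sq_nonneg (p 2), sq_nonneg (p 2 - q 2), mul_nonneg (mul_nonneg
      (show (0:ℝ) ≤ 8 by norm_num) (sq_nonneg (p 2))) hmono]
  have k0 : (q 0 - p 0) ^ 2 ≤ 2 * (Real.cosh t - 1) * (1 + 4 * Real.cosh t * (p 2) ^ 2) := by
    nlinarith [sq_nonneg (p 1 - q 1), sq_nonneg (p 2 - q 2)]
  have k1 : (q 1 - p 1) ^ 2 ≤ 2 * (Real.cosh t - 1) * (1 + 4 * Real.cosh t * (p 2) ^ 2) := by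
    nlinarith [sq_nonneg (p 0 - q 0), sq_nonneg (p 2 - q 2)]
  have k2 : (q 2 - p 2) ^ 2 ≤ 2 * (Real.cosh t - 1) * (1 + 4 * Real.cosh t * (p 2) ^ 2) := by
    nlinarith [sq_nonneg (p 0 - q 0), sq_nonneg (p 1 - q 1)]
  fin_cases i
  · exact k0
  · exact k1
  · exact k2

/-- The entries of `g⁻¹` applied to `y`, written without inverses. -/
def invApply (g : GL3) (y : V) : V :=
  ![mink y (g ![1, 0, 0]), mink y (g ![0, 1, 0]), -(mink y (g ![0, 0, 1]))]

lemma invApply_eq {g : GL3} (hg : InG0 g) (y : V) : invApply g y = (g⁻¹ : GL3) y := by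
  set z := (g⁻¹ : GL3) y with hz
  have hgz : g z = y := by rw [hz, gl3_inv_apply, g.apply_symm_apply]
  have c0 : mink y (g ![1, 0, 0]) = z 0 := by
    rw [← hgz, hg.1]; simp [mink]
  have c1 : mink y (g ![0, 1, 0]) = z 1 := by
    rw [← hgz, hg.1]; simp [mink]
  have c2 : -(mink y (g ![0, 0, 1])) = z 2 := by
    rw [← hgz, hg.1]; simp [mink]
  funext i
  fin_cases i
  · exact c0
  · exact c1
  · exact c2

lemma invApply_continuous (y : V) : Continuous fun g : GL3 => invApply g y := by
  have hcoe : Continuous fun g : GL3 => (⇑g : V → V) := continuous_induced_dom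
  have hev : ∀ v : V, Continuous fun g : GL3 => g v := fun v => (continuous_apply v).comp hcoe
  have hmk : ∀ v : V, Continuous fun g : GL3 => mink y (g v) := by
    intro v
    have hm : Continuous fun w : V => mink y w := by unfold mink; fun_prop
    exact hm.comp (hev v)
  apply continuous_pi
  intro i
  fin_cases i
  · simpa [invApply] using hmk ![1, 0, 0]
  · simpa [invApply] using hmk ![0, 1, 0]
  · show Continuous fun g : GL3 => -(mink y (g ![0, 0, 1])); exact (hmk ![0, 0, 1]).neg

/-- The contraction `p ↦ g⁻¹ · f(p)` on `ℍ²`. -/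
def Fmap (f : V → V) (hf : ∀ p ∈ H2, f p ∈ H2) (g : GL3) (hg : InG0 g) (p : H2S) : H2S :=
  ⟨(g⁻¹ : GL3) (f p.val), (hg.inv).2.2 _ (hf _ p.prop)⟩

/-- The Lipschitz constant as a nonnegative real. -/
def KNN (K : ℝ) : NNReal := ⟨max K 0, le_max_right _ _⟩

lemma Fmap_contracting (f : V → V) (hf : ∀ p ∈ H2, f p ∈ H2) (K : ℝ) (hK : K < 1)
    (hLip : ∀ p ∈ H2, ∀ q ∈ H2, hdist (f p) (f q) ≤ K * hdist p q)
    (g : GL3) (hg : InG0 g) :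
    ContractingWith (KNN K) (Fmap f hf g hg) := by
  constructor
  · change (KNN K : ℝ) < 1
    show max K 0 < 1
    exact max_lt hK one_pos
  · apply LipschitzWith.of_dist_le_mul
    intro p q
    show hdist ((g⁻¹ : GL3) (f p.val)) ((g⁻¹ : GL3) (f q.val)) ≤ _ * hdist p.val q.val
    rw [InG0.hdist_eq hg.inv]
    have h1 := hLip p.val p.prop q.val q.prop
    have h2 : 0 ≤ hdist p.val q.val := hdist_nonneg' p.prop q.prop
    have h3 : K ≤ max K 0 := le_max_left _ _
    calc hdist (f p.val) (f q.val) ≤ K * hdist p.val q.val := h1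
      _ ≤ max K 0 * hdist p.val q.val := by nlinarith
      _ = (KNN K : ℝ) * hdist p.val q.val := rfl

/-- The fixed point of `p ↦ g⁻¹ · f(p)`. -/
def PiPoint (f : V → V) (hf : ∀ p ∈ H2, f p ∈ H2) (K : ℝ) (hK : K < 1)
    (hLip : ∀ p ∈ H2, ∀ q ∈ H2, hdist (f p) (f q) ≤ K * hdist p q)
    (g : GL3) (hg : InG0 g) : H2S :=
  ContractingWith.fixedPoint (Fmap f hf g hg) (Fmap_contracting f hf K hK hLip g hg)

variable {f : V → V} {hf : ∀ p ∈ H2, f p ∈ H2} {K : ℝ} {hK : K < 1}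
  {hLip : ∀ p ∈ H2, ∀ q ∈ H2, hdist (f p) (f q) ≤ K * hdist p q}

lemma PiPoint_isFixed (g : GL3) (hg : InG0 g) :
    Fmap f hf g hg (PiPoint f hf K hK hLip g hg) = PiPoint f hf K hK hLip g hg :=
  ContractingWith.fixedPoint_isFixedPt (Fmap_contracting f hf K hK hLip g hg)

lemma PiPoint_fixed (g : GL3) (hg : InG0 g) :
    f (PiPoint f hf K hK hLip g hg).val = g (PiPoint f hf K hK hLip g hg).val := by
  have h := PiPoint_isFixed (hf := hf) (hK := hK) (hLip := hLip) g hg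
  have hval := congrArg H2S.val h
  calc f (PiPoint f hf K hK hLip g hg).val
      = g ((g⁻¹ : GL3) (f (PiPoint f hf K hK hLip g hg).val)) := by
        rw [gl3_inv_apply, g.apply_symm_apply]
    _ = g (PiPoint f hf K hK hLip g hg).val := congrArg g hval

lemma PiPoint_unique (g : GL3) (hg : InG0 g) {p : V} (hp : p ∈ H2) (hfp : f p = g p) :
    p = (PiPoint f hf K hK hLip g hg).val := by
  have hfx : Fmap f hf g hg ⟨p, hp⟩ = ⟨p, hp⟩ := by
    apply H2S.ext'
    show (g⁻¹ : GL3) (f p) = p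
    rw [hfp, gl3_inv_apply, g.symm_apply_apply]
  have := (Fmap_contracting f hf K hK hLip g hg).fixedPoint_unique hfx
  exact congrArg H2S.val this

lemma PiPoint_val_eq (g : GL3) (hg : InG0 g) :
    (PiPoint f hf K hK hLip g hg).val = (g⁻¹ : GL3) (f (PiPoint f hf K hK hLip g hg).val) :=
  (congrArg H2S.val (PiPoint_isFixed (hf := hf) (hK := hK) (hLip := hLip) g hg)).symm

lemma PiPoint_dist_le (g g' : GL3) (hg : InG0 g) (hg' : InG0 g') :
    (1 - max K 0) * dist (PiPoint f hf K hK hLip g' hg') (PiPoint f hf K hK hLip g hg)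
      ≤ hdist ((g'⁻¹ : GL3) (f (PiPoint f hf K hK hLip g hg).val))
          ((g⁻¹ : GL3) (f (PiPoint f hf K hK hLip g hg).val)) := by
  set PP := PiPoint f hf K hK hLip g hg with hPP
  set PQ := PiPoint f hf K hK hLip g' hg' with hPQ
  have h1 : Fmap f hf g' hg' PQ = PQ := PiPoint_isFixed (hf := hf) (hK := hK) (hLip := hLip) g' hg'
  have h2 : dist PQ PP ≤ dist (Fmap f hf g' hg' PQ) (Fmap f hf g' hg' PP)
      + dist (Fmap f hf g' hg' PP) PP := by
    nth_rewrite 1 [← h1]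
    exact dist_triangle _ _ _
  have h3 : dist (Fmap f hf g' hg' PQ) (Fmap f hf g' hg' PP)
      ≤ (max K 0) * dist PQ PP :=
    (Fmap_contracting f hf K hK hLip g' hg').2.dist_le_mul PQ PP
  have h4 : dist (Fmap f hf g' hg' PP) PP
      = hdist ((g'⁻¹ : GL3) (f PP.val)) ((g⁻¹ : GL3) (f PP.val)) := by
    have hval := PiPoint_val_eq (hf := hf) (hK := hK) (hLip := hLip) g hg
    show hdist ((g'⁻¹ : GL3) (f PP.val)) PP.val = _
    exact congrArg (hdist ((g'⁻¹ : GL3) (f PP.val))) hval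
  linarith

end Aux2

/-- Proposition 6.2.(1): a `(j,ρ)`-equivariant `K`-Lipschitz map
`f : ℍ² → ℍ²` with `K < 1` yields an equivariant fibration `PP` of anti-de Sitter space `G₀`
over `ℍ²` by timelike geodesic circles, and in particular the action of `Γ` on `G₀` by
`γ·g = ρ(γ) g j(γ)⁻¹` is properly discontinuous. -/
theorem statement4 {Γ : Type*} [Group Γ] (j ρ : Γ →* GL3)
    (hjG0 : ∀ γ : Γ, InG0 (j γ)) (hρG0 : ∀ γ : Γ, InG0 (ρ γ))
    (hpd : ProperlyDiscOn (fun (γ : Γ) (p : V) => j γ p) H2)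
    (f : V → V) (hf : ∀ p ∈ H2, f p ∈ H2)
    (K : ℝ) (hK : K < 1)
    (hLip : ∀ p ∈ H2, ∀ q ∈ H2, hdist (f p) (f q) ≤ K * hdist p q)
    (heqv : ∀ (γ : Γ), ∀ p ∈ H2, f (j γ p) = ρ γ (f p)) :
    ∃ Pr : GL3 → V,
      (∀ g : GL3, InG0 g → Pr g ∈ H2 ∧ f (Pr g) = g (Pr g) ∧
        ∀ p ∈ H2, f p = g p → p = Pr g) ∧
      (ContinuousOn Pr {g : GL3 | InG0 g} ∧ ∀ p ∈ H2, ∃ g : GL3, InG0 g ∧ Pr g = p) ∧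
      (∀ (γ : Γ) (g : GL3), InG0 g → Pr (ρ γ * g * (j γ)⁻¹) = j γ (Pr g)) ∧
      ProperlyDiscOn (fun (γ : Γ) (g : GL3) => ρ γ * g * (j γ)⁻¹) {g : GL3 | InG0 g} := by
  classical
  have hk1 : max K 0 < 1 := max_lt hK one_pos
  have hk0 : (0 : ℝ) ≤ max K 0 := le_max_right _ _
  set Pr : GL3 → V := fun g =>
    if hg : InG0 g then (PiPoint f hf K hK hLip g hg).val else ![0, 0, 1] with hPrDef
  have hPr : ∀ g (hg : InG0 g), Pr g = (PiPoint f hf K hK hLip g hg).val := by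
    intro g hg; simp only [hPrDef]; rw [dif_pos hg]
  have hPrH2 : ∀ g (hg : InG0 g), Pr g ∈ H2 := by
    intro g hg; rw [hPr g hg]; exact (PiPoint f hf K hK hLip g hg).prop
  have hequiv : ∀ (γ : Γ) (g : GL3), InG0 g → Pr (ρ γ * g * (j γ)⁻¹) = j γ (Pr g) := by
    intro γ g hg
    have hg' : InG0 (ρ γ * g * (j γ)⁻¹) := ((hρG0 γ).mul hg).mul (hjG0 γ).inv
    rw [hPr _ hg', hPr g hg]
    have hpH2 : j γ (PiPoint f hf K hK hLip g hg).val ∈ H2 :=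
      (hjG0 γ).2.2 _ (PiPoint f hf K hK hLip g hg).prop
    have hfp : f (j γ (PiPoint f hf K hK hLip g hg).val)
        = (ρ γ * g * (j γ)⁻¹) (j γ (PiPoint f hf K hK hLip g hg).val) := by
      rw [heqv γ _ (PiPoint f hf K hK hLip g hg).prop,
        PiPoint_fixed (hf := hf) (hK := hK) (hLip := hLip) g hg,
        gl3_mul_apply, gl3_mul_apply, gl3_inv_apply, (j γ).symm_apply_apply]
    exact (PiPoint_unique _ hg' hpH2 hfp).symm
  have hcont : ContinuousOn Pr {g : GL3 | InG0 g} := by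
    intro g hgS
    have hg : InG0 g := hgS
    set PP := PiPoint f hf K hK hLip g hg with hPPdef
    set y : V := f PP.val with hy
    have hyH2 : y ∈ H2 := hf _ PP.prop
    set A : GL3 → ℝ := fun g' => -(mink (invApply g' y) (invApply g y)) with hAdef
    have hAc : Continuous A := by
      have h1 := mink_continuous2.comp
        ((invApply_continuous y).prodMk (continuous_const (y := invApply g y)))
      exact h1.neg
    have hAg : A g = 1 := by
      have h1 : invApply g y = (g⁻¹ : GL3) y := invApply_eq hg y
      have h2 : (g⁻¹ : GL3) y ∈ H2 := hg.inv.2.2 y hyH2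
      show -(mink (invApply g y) (invApply g y)) = 1
      rw [h1, h2.1]; norm_num
    set c : ℝ := (1 - max K 0)⁻¹ with hcdef
    have hcpos : 0 < c := inv_pos.2 (by linarith)
    have hck : c * (1 - max K 0) = 1 := inv_mul_cancel₀ (by linarith)
    set B : GL3 → ℝ := fun g' => ((A g' - 1) + Real.sqrt ((A g') ^ 2 - 1)) * c with hBdef
    have hBc : Continuous B := ((hAc.sub continuous_const).add
      (Real.continuous_sqrt.comp ((hAc.pow 2).sub continuous_const))).mul continuous_const
    have hBg : B g = 0 := by
      show ((A g - 1) + Real.sqrt ((A g) ^ 2 - 1)) * c = 0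
      rw [hAg]; norm_num
    have hkey : ∀ g' (hg' : InG0 g'), 0 ≤ B g' ∧
        hdist PP.val (PiPoint f hf K hK hLip g' hg').val ≤ B g' := by
      intro g' hg'
      have hA1 : invApply g' y = (g'⁻¹ : GL3) y := invApply_eq hg' y
      have hA2 : invApply g y = (g⁻¹ : GL3) y := invApply_eq hg y
      have hz1 : (g'⁻¹ : GL3) y ∈ H2 := hg'.inv.2.2 y hyH2
      have hz2 : (g⁻¹ : GL3) y ∈ H2 := hg.inv.2.2 y hyH2
      have hAval : A g' = -(mink ((g'⁻¹ : GL3) y) ((g⁻¹ : GL3) y)) := by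
        show -(mink (invApply g' y) (invApply g y)) = _
        rw [hA1, hA2]
      have hge1 : 1 ≤ A g' := by rw [hAval]; exact cs_ge_one hz1 hz2
      have hB0 : 0 ≤ B g' := by
        have := Real.sqrt_nonneg ((A g') ^ 2 - 1)
        have h1 : 0 ≤ (A g' - 1) + Real.sqrt ((A g') ^ 2 - 1) := by linarith
        exact mul_nonneg h1 hcpos.le
      refine ⟨hB0, ?_⟩
      have hest := PiPoint_dist_le (f := f) (hf := hf) (K := K) (hK := hK) (hLip := hLip)
        g g' hg hg'
      have hhd : hdist ((g'⁻¹ : GL3) y) ((g⁻¹ : GL3) y) = acosh (A g') := by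
        rw [hAval]; rfl
      have hacle : acosh (A g') ≤ (A g' - 1) + Real.sqrt ((A g') ^ 2 - 1) :=
        acosh_le_sub_add hge1
      have hdd : hdist PP.val (PiPoint f hf K hK hLip g' hg').val
          = dist (PiPoint f hf K hK hLip g' hg') PP := by
        rw [dist_comm]; rfl
      rw [hdd]
      rw [hhd] at hest
      have hBval : B g' = (A g' - 1 + Real.sqrt ((A g') ^ 2 - 1)) * c := rfl
      have h5 : dist (PiPoint f hf K hK hLip g' hg') PP ≤ c * acosh (A g') := by
        calc dist (PiPoint f hf K hK hLip g' hg') PP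
            = c * ((1 - max K 0) * dist (PiPoint f hf K hK hLip g' hg') PP) := by
              rw [show c * ((1 - max K 0) * dist (PiPoint f hf K hK hLip g' hg') PP)
                = (c * (1 - max K 0)) * dist (PiPoint f hf K hK hLip g' hg') PP by ring,
                hck, one_mul]
          _ ≤ c * acosh (A g') := mul_le_mul_of_nonneg_left hest hcpos.le
      calc dist (PiPoint f hf K hK hLip g' hg') PP ≤ c * acosh (A g') := h5
        _ ≤ c * (A g' - 1 + Real.sqrt ((A g') ^ 2 - 1)) :=
            mul_le_mul_of_nonneg_left hacle hcpos.le
        _ = B g' := by rw [hBval]; ring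
    show ContinuousWithinAt Pr {g : GL3 | InG0 g} g
    have hΨc : Continuous fun g' : GL3 =>
        2 * (Real.cosh (B g') - 1) * (1 + 4 * Real.cosh (B g') * (PP.val 2) ^ 2) := by
      have hcosh : Continuous fun g' : GL3 => Real.cosh (B g') := Real.continuous_cosh.comp hBc
      fun_prop
    have hΨg : 2 * (Real.cosh (B g) - 1) * (1 + 4 * Real.cosh (B g) * (PP.val 2) ^ 2) = 0 := by
      rw [hBg, Real.cosh_zero]; ring
    unfold ContinuousWithinAt
    rw [hPr g hg]
    apply tendsto_pi_nhds.2
    intro i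
    rw [tendsto_iff_dist_tendsto_zero]
    apply squeeze_zero' (Filter.Eventually.of_forall fun _ => dist_nonneg)
    · filter_upwards [self_mem_nhdsWithin] with g' hg'S
      have hg' : InG0 g' := hg'S
      have hb := coord_bound PP.prop (PiPoint f hf K hK hLip g' hg').prop
        (hkey g' hg').1 (hkey g' hg').2 i
      rw [hPr g' hg', Real.dist_eq, ← Real.sqrt_sq_eq_abs]
      exact Real.sqrt_le_sqrt hb
    · have h0 : Real.sqrt
          (2 * (Real.cosh (B g) - 1) * (1 + 4 * Real.cosh (B g) * (PP.val 2) ^ 2)) = 0 := by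
        rw [hΨg]; exact Real.sqrt_zero
      have ht := (Real.continuous_sqrt.comp hΨc).tendsto g
      rw [Function.comp_apply] at ht
      rw [h0] at ht
      exact ht.mono_left nhdsWithin_le_nhds
  refine ⟨Pr, ?_, ⟨hcont, ?_⟩, hequiv, ?_⟩
  · intro g hg
    refine ⟨hPrH2 g hg, ?_, ?_⟩
    · rw [hPr g hg]; exact PiPoint_fixed (hf := hf) (hK := hK) (hLip := hLip) g hg
    · intro p hp hfp
      rw [hPr g hg]
      exact PiPoint_unique g hg hp hfp
  · intro p hp
    obtain ⟨g, hg, hgp⟩ := transitive_H2 hp (hf p hp)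
    exact ⟨g, hg, by rw [hPr g hg]; exact (PiPoint_unique g hg hp hgp.symm).symm⟩
  · intro Kc Lc hKS hLS hKc hLc
    have hsub : {γ : Γ | (((fun g => ρ γ * g * (j γ)⁻¹) '' Kc) ∩ Lc).Nonempty} ⊆
        {γ : Γ | (((fun p => j γ p) '' (Pr '' Kc)) ∩ (Pr '' Lc)).Nonempty} := by
      intro γ hγ
      obtain ⟨x, ⟨g0, hg0K, rfl⟩, hxL⟩ := hγ
      refine ⟨j γ (Pr g0), ⟨Pr g0, ⟨g0, hg0K, rfl⟩, rfl⟩, ?_⟩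
      rw [← hequiv γ g0 (hKS hg0K)]
      exact Set.mem_image_of_mem Pr hxL
    exact Set.Finite.subset (hpd (Pr '' Kc) (Pr '' Lc)
      (by rintro _ ⟨g0, hg0, rfl⟩; exact hPrH2 g0 (hKS hg0))
      (by rintro _ ⟨g0, hg0, rfl⟩; exact hPrH2 g0 (hLS hg0))
      (hKc.image_of_continuousOn (hcont.mono hKS))
      (hLc.image_of_continuousOn (hcont.mono hLS))) hsub
end
end

section
/- Let k < 0 and let X be a k-lipschitz convex field defined over all of ℍ². Then there is exactly one point p ∈ ℍ² with 0 ∈ X(p). -/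
noncomputable section

set_option maxHeartbeats 2000000

lemma mink_lt_neg_one {p q : V} (hp : p ∈ H2) (hq : q ∈ H2) (hpq : p ≠ q) :
    mink p q < -1 := by
  obtain ⟨hp1, hp2⟩ := hp
  obtain ⟨hq1, hq2⟩ := hq
  by_contra h
  push_neg at h
  apply hpq
  have h1 : (p 0 - q 0)^2 + (p 1 - q 1)^2 ≤ (p 2 - q 2)^2 := by
    simp only [mink] at hp1 hq1 h; nlinarith
  have h2 : p 2 = q 2 := by
    rcases lt_trichotomy (p 2) (q 2) with hlt | he | hgt
    · exfalso
      have hu : 0 ≤ mink (q - p) p := by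
        simp only [mink, Pi.sub_apply] at *; nlinarith
      simp only [mink, Pi.sub_apply] at *
      nlinarith [sq_nonneg ((q 0 - p 0) * p 1 - (q 1 - p 1) * p 0), mul_pos (sub_pos.mpr hlt) hp2]
    · exact he
    · exfalso
      have hu : 0 ≤ mink (p - q) q := by
        simp only [mink, Pi.sub_apply] at *; nlinarith
      simp only [mink, Pi.sub_apply] at *
      nlinarith [sq_nonneg ((p 0 - q 0) * q 1 - (p 1 - q 1) * q 0), mul_pos (sub_pos.mpr hgt) hq2]
  have h0 : (p 0 - q 0)^2 + (p 1 - q 1)^2 ≤ 0 := by rw [h2] at h1; simpa using h1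
  have e0 : (p 0 - q 0)^2 = 0 := le_antisymm (by nlinarith [sq_nonneg (p 1 - q 1)]) (sq_nonneg _)
  have e1 : (p 1 - q 1)^2 = 0 := le_antisymm (by nlinarith [sq_nonneg (p 0 - q 0)]) (sq_nonneg _)
  have e0' : p 0 = q 0 := by nlinarith [sq_nonneg (p 0 - q 0)]
  have e1' : p 1 = q 1 := by nlinarith [sq_nonneg (p 1 - q 1)]
  funext i
  fin_cases i
  · exact e0'
  · exact e1'
  · exact h2

lemma tangent_spacelike {p x : V} (hp : p ∈ H2) (hx : mink x p = 0) :
    0 ≤ mink x x ∧ (mink x x = 0 → x = 0) := by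
  obtain ⟨hp1, hp2⟩ := hp
  simp only [mink] at hp1 hx
  have key : mink x x * (p 2)^2 = (x 0 * p 1 - x 1 * p 0)^2 + (x 0)^2 + (x 1)^2 := by
    simp only [mink]
    linear_combination (x 0 * p 0 + x 1 * p 1 + x 2 * p 2) * hx - (x 0^2 + x 1^2) * hp1
  constructor
  · nlinarith [sq_nonneg (x 0 * p 1 - x 1 * p 0), sq_nonneg (x 0), sq_nonneg (x 1), sq_nonneg (p 2)]
  · intro h0
    have h1 : (x 0)^2 + (x 1)^2 ≤ 0 := by nlinarith [sq_nonneg (x 0 * p 1 - x 1 * p 0)]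
    have hx0 : x 0 = 0 := by nlinarith [sq_nonneg (x 0), sq_nonneg (x 1)]
    have hx1 : x 1 = 0 := by nlinarith [sq_nonneg (x 0), sq_nonneg (x 1)]
    have hx2 : x 2 = 0 := by
      rw [hx0, hx1] at hx
      simp at hx
      rcases hx with h | h
      · exact h
      · nlinarith
    funext i; fin_cases i <;> simpa [hx0, hx1, hx2]
lemma acosh_hasDerivAt {y : ℝ} (h : 1 < y) :
    HasDerivAt acosh (1 / Real.sqrt (y^2 - 1)) y := by
  have hy2 : 0 < y^2 - 1 := by nlinarith
  have hs : 0 < Real.sqrt (y^2 - 1) := Real.sqrt_pos.mpr hy2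
  have hs2 : Real.sqrt (y^2-1)^2 = y^2 - 1 := Real.sq_sqrt hy2.le
  have h1 : HasDerivAt (fun x : ℝ => x^2 - 1) (2*y) y := by
    simpa using (hasDerivAt_pow 2 y).sub_const 1
  have h2 : HasDerivAt (fun x : ℝ => Real.sqrt (x^2-1)) (1/(2*Real.sqrt (y^2-1)) * (2*y)) y :=
    (Real.hasDerivAt_sqrt (ne_of_gt hy2)).comp y h1
  have h3 : HasDerivAt (fun x : ℝ => x + Real.sqrt (x^2-1)) (1 + 1/(2*Real.sqrt (y^2-1)) * (2*y)) y :=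
    (hasDerivAt_id y).add h2
  have h4 : y + Real.sqrt (y^2-1) ≠ 0 := by positivity
  have h5 := h3.log h4
  have hfun : acosh = fun x : ℝ => Real.log (x + Real.sqrt (x^2-1)) := rfl
  rw [hfun]
  convert h5 using 1
  rw [div_eq_div_iff hs.ne' h4]
  field_simp
  nlinarith [hs2]

lemma acosh_cosh_s8 {d : ℝ} (hd : 0 ≤ d) : acosh (Real.cosh d) = d := by
  have h1 : Real.cosh d ^ 2 - 1 = Real.sinh d ^ 2 := by
    have := Real.cosh_sq_sub_sinh_sq d; linarith
  rw [acosh, h1, Real.sqrt_sq (Real.sinh_nonneg_iff.mpr hd), Real.cosh_add_sinh, Real.log_exp]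

lemma acosh_pos {y : ℝ} (h : 1 < y) : 0 < acosh y := by
  rw [acosh]
  apply Real.log_pos
  nlinarith [Real.sqrt_nonneg (y^2-1)]

lemma acosh_mono {a b : ℝ} (h1 : 1 ≤ a) (h : a ≤ b) : acosh a ≤ acosh b := by
  rw [acosh, acosh]
  apply Real.log_le_log (by nlinarith [Real.sqrt_nonneg (a^2-1)])
  have : Real.sqrt (a^2-1) ≤ Real.sqrt (b^2-1) := Real.sqrt_le_sqrt (by nlinarith)
  linarith

lemma sub_one_le_sqrt {c : ℝ} (h : 1 ≤ c) : c - 1 ≤ Real.sqrt (c^2 - 1) := by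
  rw [show c^2 - 1 = (c-1)*(c+1) by ring, Real.sqrt_mul (by linarith)]
  nlinarith [Real.sq_sqrt (show (0:ℝ) ≤ c - 1 by linarith),
    Real.sq_sqrt (show (0:ℝ) ≤ c + 1 by linarith),
    Real.sqrt_le_sqrt (show c - 1 ≤ c + 1 by linarith),
    Real.sqrt_nonneg (c-1), Real.sqrt_nonneg (c+1)]

lemma mexp_zero (p x : V) : mexp p x 0 = p := by
  unfold mexp
  split
  · rfl
  · funext i
    simp [Real.cosh_zero, Real.sinh_zero]

lemma mexp_hasDerivAt {p x : V} (hp : p ∈ H2) (hx : mink x p = 0) (i : Fin 3) :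
    HasDerivAt (fun t => mexp p x t i) (x i) 0 := by
  by_cases h0 : x = 0
  · subst h0
    simp only [mexp, if_pos rfl]
    simpa using hasDerivAt_const (0:ℝ) (p i)
  · have hsp := tangent_spacelike hp hx
    have hmm : 0 < mink x x := lt_of_le_of_ne hsp.1 (fun h => h0 (hsp.2 h.symm))
    have ha0 : 0 < mnorm x := Real.sqrt_pos.mpr hmm
    set a := mnorm x with ha
    have hta : HasDerivAt (fun t : ℝ => t * a) a 0 := by
      simpa using (hasDerivAt_id (0:ℝ)).mul_const a
    have hch : HasDerivAt (fun t : ℝ => Real.cosh (t*a)) (Real.sinh (0*a) * a) 0 := hta.cosh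
    have hsh : HasDerivAt (fun t : ℝ => Real.sinh (t*a)) (Real.cosh (0*a) * a) 0 := hta.sinh
    have h := (hch.mul_const (p i)).add ((hsh.div_const a).mul_const (x i))
    have hfun : (fun t => mexp p x t i)
        = fun t => Real.cosh (t*a) * p i + Real.sinh (t*a)/a * x i := by
      funext t
      simp [mexp, h0, Pi.add_apply, Pi.smul_apply, smul_eq_mul]
      rw [← ha]
    rw [hfun]
    refine h.congr_deriv ?_
    simp [Real.sinh_zero, Real.cosh_zero]
    field_simp

lemma lemA {k : ℝ} {X : Set (V × V)} (hX : IsConvexField X) (hlip : LipschitzField k X)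
    {p xp q xq : V} (hpX : (p, xp) ∈ X) (hqX : (q, xq) ∈ X) (hpq : p ≠ q) :
    (-k) * hdist p q * Real.sqrt ((mink p q)^2 - 1) ≤ mink xp q + mink p xq := by
  obtain ⟨hp, hxp⟩ := hX.2.1 _ hpX
  obtain ⟨hq, hxq⟩ := hX.2.1 _ hqX
  have hlt : mink p q < -1 := mink_lt_neg_one hp hq hpq
  have hc : 1 < -(mink p q) := by linarith
  have hP := fun i => mexp_hasDerivAt hp hxp i
  have hQ := fun i => mexp_hasDerivAt hq hxq i
  have hm : HasDerivAt (fun t => -(mink (mexp p xp t) (mexp q xq t)))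
      (-(mink xp q + mink p xq)) 0 := by
    have hmm := ((((hP 0).mul (hQ 0)).add ((hP 1).mul (hQ 1))).sub ((hP 2).mul (hQ 2))).neg
    have hfun : (fun t => -(mink (mexp p xp t) (mexp q xq t)))
        = fun t => -((mexp p xp t 0) * (mexp q xq t 0) + (mexp p xp t 1) * (mexp q xq t 1)
            - (mexp p xp t 2) * (mexp q xq t 2)) := rfl
    rw [hfun]
    refine hmm.congr_deriv ?_
    rw [mexp_zero, mexp_zero]
    simp only [mink]
    ring
  have h00 : -(mink (mexp p xp 0) (mexp q xq 0)) = -(mink p q) := by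
    rw [mexp_zero, mexp_zero]
  have hg : HasDerivAt acosh (1 / Real.sqrt ((-(mink p q))^2 - 1))
      ((fun t => -(mink (mexp p xp t) (mexp q xq t))) 0) := by
    show HasDerivAt acosh _ (-(mink (mexp p xp 0) (mexp q xq 0)))
    rw [h00]
    exact acosh_hasDerivAt hc
  have hcomp := hg.comp 0 hm
  have hfd : (acosh ∘ fun t => -(mink (mexp p xp t) (mexp q xq t)))
      = fun t => hdist (mexp p xp t) (mexp q xq t) := rfl
  rw [hfd] at hcomp
  have hderiv : dprime p xp q xq
      = 1 / Real.sqrt ((-(mink p q))^2 - 1) * -(mink xp q + mink p xq) := hcomp.deriv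
  have hineq := hlip p xp q xq hpX hqX hpq
  rw [hderiv] at hineq
  have hsq : 0 < Real.sqrt ((-(mink p q))^2 - 1) := Real.sqrt_pos.mpr (by nlinarith)
  have hsq' : Real.sqrt ((mink p q)^2 - 1) = Real.sqrt ((-(mink p q))^2 - 1) := by
    rw [neg_sq]
  rw [hsq']
  have h2 := mul_le_mul_of_nonneg_right hineq hsq.le
  rw [one_div, inv_mul_eq_div, div_mul_cancel₀ _ hsq.ne'] at h2
  linarith

lemma lemA_pos {k : ℝ} (hk : k < 0) {p q : V} (hp : p ∈ H2) (hq : q ∈ H2) (hpq : p ≠ q) :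
    0 < (-k) * hdist p q * Real.sqrt ((mink p q)^2 - 1) := by
  have hlt : mink p q < -1 := mink_lt_neg_one hp hq hpq
  have h1 : 0 < hdist p q := acosh_pos (by linarith)
  have h2 : 0 < Real.sqrt ((mink p q)^2 - 1) := Real.sqrt_pos.mpr (by nlinarith)
  have h3 : 0 < -k := by linarith
  positivity
/-- Parametrization of `ℍ²` by Fermi coordinates along the geodesic `y = 0`. -/
def PP (s t : ℝ) : V := ![Real.cosh t * Real.sinh s, Real.sinh t, Real.cosh t * Real.cosh s]

/-- Unit tangent along the leaf (`t`-direction). -/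
def TT (s t : ℝ) : V := ![Real.sinh t * Real.sinh s, Real.cosh t, Real.sinh t * Real.cosh s]

/-- Unit normal to the leaf (`s`-direction). -/
def NN (s : ℝ) : V := ![Real.cosh s, 0, Real.sinh s]

lemma mink_comm (x y : V) : mink x y = mink y x := by simp only [mink]; ring

lemma mink_PP_PP (s t s' t' : ℝ) : mink (PP s t) (PP s' t')
    = Real.sinh t * Real.sinh t' - Real.cosh t * Real.cosh t' * Real.cosh (s - s') := by
  simp only [mink, PP, Real.cosh_sub, Matrix.cons_val_zero, Matrix.cons_val_one,
    Matrix.head_cons, Matrix.cons_val_two, Matrix.tail_cons]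
  ring

lemma mink_TT_PP (s t s' t' : ℝ) : mink (TT s t) (PP s' t')
    = Real.cosh t * Real.sinh t' - Real.sinh t * Real.cosh t' * Real.cosh (s - s') := by
  simp only [mink, TT, PP, Real.cosh_sub, Matrix.cons_val_zero, Matrix.cons_val_one,
    Matrix.head_cons, Matrix.cons_val_two, Matrix.tail_cons]
  ring

lemma mink_NN_PP (s s' t' : ℝ) : mink (NN s) (PP s' t')
    = Real.cosh t' * Real.sinh (s' - s) := by
  simp only [mink, NN, PP, Real.sinh_sub, Matrix.cons_val_zero, Matrix.cons_val_one,
    Matrix.head_cons, Matrix.cons_val_two, Matrix.tail_cons]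
  ring

lemma mink_NN_TT (s s' t' : ℝ) : mink (NN s) (TT s' t')
    = Real.sinh t' * Real.sinh (s' - s) := by
  simp only [mink, NN, TT, Real.sinh_sub, Matrix.cons_val_zero, Matrix.cons_val_one,
    Matrix.head_cons, Matrix.cons_val_two, Matrix.tail_cons]
  ring

lemma PP_mem_H2 (s t : ℝ) : PP s t ∈ H2 := by
  constructor
  · rw [show mink (PP s t) (PP s t) = mink (PP s t) (PP s t) from rfl, mink_PP_PP]
    simp only [sub_self, Real.cosh_zero, mul_one]
    nlinarith [Real.cosh_sq_sub_sinh_sq t]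
  · show 0 < Real.cosh t * Real.cosh s
    positivity

lemma basis_expansion (s t : ℝ) (w : V) :
    w = mink w (TT s t) • TT s t + mink w (NN s) • NN s - mink w (PP s t) • PP s t := by
  have ht := Real.cosh_sq_sub_sinh_sq t
  have hs := Real.cosh_sq_sub_sinh_sq s
  funext i
  fin_cases i
  · show w 0 = (mink w (TT s t) • TT s t + mink w (NN s) • NN s - mink w (PP s t) • PP s t) 0
    simp only [mink, TT, NN, PP, Pi.add_apply, Pi.sub_apply, Pi.smul_apply, smul_eq_mul,
      Matrix.cons_val_zero, Matrix.cons_val_one, Matrix.head_cons, Matrix.cons_val_two,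
      Matrix.tail_cons]
    linear_combination (-(w 0)) * hs + (w 0 * Real.sinh s ^ 2 - w 2 * Real.sinh s * Real.cosh s) * ht
  · show w 1 = (mink w (TT s t) • TT s t + mink w (NN s) • NN s - mink w (PP s t) • PP s t) 1
    simp only [mink, TT, NN, PP, Pi.add_apply, Pi.sub_apply, Pi.smul_apply, smul_eq_mul,
      Matrix.cons_val_zero, Matrix.cons_val_one, Matrix.head_cons, Matrix.cons_val_two,
      Matrix.tail_cons]
    linear_combination (-(w 1)) * ht
  · show w 2 = (mink w (TT s t) • TT s t + mink w (NN s) • NN s - mink w (PP s t) • PP s t) 2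
    simp only [mink, TT, NN, PP, Pi.add_apply, Pi.sub_apply, Pi.smul_apply, smul_eq_mul,
      Matrix.cons_val_zero, Matrix.cons_val_one, Matrix.head_cons, Matrix.cons_val_two,
      Matrix.tail_cons]
    linear_combination (-(w 2)) * hs + (w 0 * Real.sinh s * Real.cosh s - w 2 * Real.cosh s ^ 2) * ht

/-- Lower bound on `-(mink (PP s t) (PP s' t'))`. -/
lemma c_lower (s t s' t') : Real.cosh t * Real.cosh t' * (Real.cosh (s - s') - 1) + 1
    ≤ -(mink (PP s t) (PP s' t')) := by
  rw [mink_PP_PP]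
  have h1 : 1 ≤ Real.cosh t * Real.cosh t' - Real.sinh t * Real.sinh t' := by
    rw [← Real.cosh_sub]; exact Real.one_le_cosh _
  linarith

lemma c_ge_cosh (s t s' t') : Real.cosh (s - s') ≤ -(mink (PP s t) (PP s' t')) := by
  have h := c_lower s t s' t'
  have h1 : 1 ≤ Real.cosh t * Real.cosh t' :=
    one_le_mul_of_one_le_of_one_le (Real.one_le_cosh t) (Real.one_le_cosh t')
  nlinarith [Real.one_le_cosh (s - s')]

lemma PP_ne_of_mink {p q : V} (hq : q ∈ H2) (h : mink p q < -1) : p ≠ q := by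
  intro e
  rw [e, hq.1] at h
  exact lt_irrefl _ h
lemma mink_expand (s t : ℝ) (x w : V) : mink x w
    = mink w (TT s t) * mink x (TT s t) + mink w (NN s) * mink x (NN s)
      - mink w (PP s t) * mink x (PP s t) := by
  conv_lhs => rw [basis_expansion s t w]
  simp only [mink, Pi.add_apply, Pi.sub_apply, Pi.smul_apply, smul_eq_mul]
  ring

lemma hdist_PP (s : ℝ) {t t' : ℝ} (h : t < t') : hdist (PP s t) (PP s t') = t' - t := by
  have : mink (PP s t) (PP s t') = -Real.cosh (t' - t) := by
    rw [mink_PP_PP]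
    simp only [sub_self, Real.cosh_zero, mul_one]
    rw [show t' - t = -(t - t') by ring, Real.cosh_neg, Real.cosh_sub]
    ring
  rw [hdist, this, neg_neg, acosh_cosh_s8 (by linarith)]

lemma sqrt_PP (s : ℝ) {t t' : ℝ} (h : t < t') :
    Real.sqrt ((mink (PP s t) (PP s t'))^2 - 1) = Real.sinh (t' - t) := by
  have h1 : mink (PP s t) (PP s t') = -Real.cosh (t' - t) := by
    rw [mink_PP_PP]
    simp only [sub_self, Real.cosh_zero, mul_one]
    rw [show t' - t = -(t - t') by ring, Real.cosh_neg, Real.cosh_sub]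
    ring
  rw [h1, neg_sq]
  have h2 : Real.cosh (t' - t) ^ 2 - 1 = Real.sinh (t' - t) ^ 2 := by
    have := Real.cosh_sq_sub_sinh_sq (t' - t); linarith
  rw [h2, Real.sqrt_sq (Real.sinh_nonneg_iff.mpr (by linarith))]

/-- Monotonicity of the tangential component along a leaf. -/
lemma lemB {k : ℝ} {X : Set (V × V)} (hX : IsConvexField X) (hlip : LipschitzField k X)
    {s t t' : ℝ} {x x' : V} (h : t < t')
    (hx : (PP s t, x) ∈ X) (hx' : (PP s t', x') ∈ X) :
    mink x' (TT s t') + (-k) * (t' - t) ≤ mink x (TT s t) := by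
  have hne : PP s t ≠ PP s t' := by
    apply PP_ne_of_mink (PP_mem_H2 s t')
    rw [mink_PP_PP]
    simp only [sub_self, Real.cosh_zero, mul_one]
    have : 1 < Real.cosh (t - t') := by
      rw [Real.one_lt_cosh]; intro e; apply absurd (sub_eq_zero.mp e) (ne_of_lt h)
    rw [Real.cosh_sub] at this
    linarith
  have hA := lemA hX hlip hx hx' hne
  have htan : mink x (PP s t) = 0 := (hX.2.1 _ hx).2
  have htan' : mink x' (PP s t') = 0 := (hX.2.1 _ hx').2
  have e1 : mink x (PP s t') = Real.sinh (t' - t) * mink x (TT s t) := by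
    rw [mink_expand s t x (PP s t'), mink_comm (PP s t') (TT s t), mink_TT_PP,
      mink_comm (PP s t') (NN s), mink_NN_PP, mink_comm (PP s t') (PP s t), htan]
    simp only [sub_self, Real.sinh_zero, Real.cosh_zero, mul_one, mul_zero, zero_mul,
      add_zero, Real.sinh_sub]
    ring
  have e2 : mink (PP s t) x' = -(Real.sinh (t' - t) * mink x' (TT s t')) := by
    rw [mink_comm, mink_expand s t' x' (PP s t), mink_comm (PP s t) (TT s t'), mink_TT_PP,
      mink_comm (PP s t) (NN s), mink_NN_PP, htan']
    simp only [sub_self, Real.sinh_zero, Real.cosh_zero, mul_one, mul_zero, zero_mul,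
      add_zero, Real.sinh_sub]
    ring
  rw [hdist_PP s h, sqrt_PP s h, e1, e2] at hA
  have hsh : 0 < Real.sinh (t' - t) := Real.sinh_pos_iff.mpr (by linarith)
  have key := le_of_mul_le_mul_right (show (-k) * (t' - t) * Real.sinh (t' - t)
      ≤ (mink x (TT s t) - mink x' (TT s t')) * Real.sinh (t' - t) by nlinarith [hA]) hsh
  linarith

/-- The cross-leaf inequality for crossing vectors. -/
lemma star {k : ℝ} {X : Set (V × V)} (hX : IsConvexField X) (hlip : LipschitzField k X)
    {s t s' t' : ℝ} {x x' : V} (hss : s < s')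
    (hx : (PP s t, x) ∈ X) (hx' : (PP s' t', x') ∈ X)
    (hf : mink x (TT s t) = 0) (hf' : mink x' (TT s' t') = 0) :
    (-k) * hdist (PP s t) (PP s' t') * Real.sqrt ((mink (PP s t) (PP s' t'))^2 - 1)
      ≤ (mink x (NN s) * Real.cosh t' - mink x' (NN s') * Real.cosh t) * Real.sinh (s' - s) := by
  have hc : Real.cosh (s - s') ≤ -(mink (PP s t) (PP s' t')) := c_ge_cosh s t s' t'
  have hgt : 1 < Real.cosh (s - s') := Real.one_lt_cosh.mpr (by intro e; linarith [sub_eq_zero.mp e])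
  have hne : PP s t ≠ PP s' t' := PP_ne_of_mink (PP_mem_H2 s' t') (by linarith)
  have hA := lemA hX hlip hx hx' hne
  have htan : mink x (PP s t) = 0 := (hX.2.1 _ hx).2
  have htan' : mink x' (PP s' t') = 0 := (hX.2.1 _ hx').2
  have e1 : mink x (PP s' t') = Real.cosh t' * Real.sinh (s' - s) * mink x (NN s) := by
    rw [mink_expand s t x (PP s' t'), mink_comm (PP s' t') (TT s t), mink_TT_PP,
      mink_comm (PP s' t') (NN s), mink_NN_PP, mink_comm (PP s' t') (PP s t), htan, hf]
    ring
  have e2 : mink (PP s t) x' = -(Real.cosh t * Real.sinh (s' - s) * mink x' (NN s')) := by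
    rw [mink_comm, mink_expand s' t' x' (PP s t), mink_comm (PP s t) (TT s' t'), mink_TT_PP,
      mink_comm (PP s t) (NN s'), mink_NN_PP, htan', hf']
    rw [show s - s' = -(s' - s) by ring, Real.sinh_neg]
    ring
  rw [e1, e2] at hA
  nlinarith [hA]

lemma star_pos {k : ℝ} (hk : k < 0) {X : Set (V × V)} (hX : IsConvexField X)
    (hlip : LipschitzField k X) {s t s' t' : ℝ} {x x' : V} (hss : s < s')
    (hx : (PP s t, x) ∈ X) (hx' : (PP s' t', x') ∈ X)
    (hf : mink x (TT s t) = 0) (hf' : mink x' (TT s' t') = 0)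
    (hh' : 0 ≤ mink x' (NN s')) : 0 < mink x (NN s) := by
  have hst := star hX hlip hss hx hx' hf hf'
  have hpos := lemA_pos hk (PP_mem_H2 s t) (PP_mem_H2 s' t')
    (by
      have hc : Real.cosh (s - s') ≤ -(mink (PP s t) (PP s' t')) := c_ge_cosh s t s' t'
      have hgt : 1 < Real.cosh (s - s') :=
        Real.one_lt_cosh.mpr (by intro e; linarith [sub_eq_zero.mp e])
      exact PP_ne_of_mink (PP_mem_H2 s' t') (by linarith))
  have hsh : 0 < Real.sinh (s' - s) := Real.sinh_pos_iff.mpr (by linarith)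
  by_contra h0
  push_neg at h0
  nlinarith [mul_pos (Real.cosh_pos t') hsh, mul_nonneg (mul_nonneg hh' (Real.cosh_pos t).le) hsh.le,
    mul_nonneg (neg_nonneg.mpr h0) (mul_pos (Real.cosh_pos t') hsh).le]
lemma sinh_half_le {d : ℝ} (h : 2 ≤ d) : Real.sinh d / 2 ≤ Real.cosh d - 1 := by
  rw [Real.cosh_eq, Real.sinh_eq]
  have h1 : Real.exp d = Real.exp (d/2) * Real.exp (d/2) := by rw [← Real.exp_add]; ring_nf
  nlinarith [h1, Real.add_one_le_exp (d/2), Real.exp_pos (-d), sq_nonneg (Real.exp (d/2) - 2)]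

/-- The quantitative `(**)` inequality. -/
lemma star_strong {k : ℝ} (hk : k < 0) {X : Set (V × V)} (hX : IsConvexField X)
    (hlip : LipschitzField k X) {s t s' t' : ℝ} {x x' : V} (hss : s < s')
    (hx : (PP s t, x) ∈ X) (hx' : (PP s' t', x') ∈ X)
    (hf : mink x (TT s t) = 0) (hf' : mink x' (TT s' t') = 0) :
    (-k) * (s' - s) * (Real.cosh t * Real.cosh t' * (Real.cosh (s' - s) - 1))
      ≤ (mink x (NN s) * Real.cosh t' - mink x' (NN s') * Real.cosh t) * Real.sinh (s' - s) := by
  have hst := star hX hlip hss hx hx' hf hf'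
  have hk' : (0:ℝ) < -k := by linarith
  have hcs : Real.cosh (s - s') = Real.cosh (s' - s) := by
    rw [show s - s' = -(s' - s) by ring, Real.cosh_neg]
  have hc : Real.cosh (s' - s) ≤ -(mink (PP s t) (PP s' t')) := by
    rw [← hcs]; exact c_ge_cosh s t s' t'
  have hc1 : Real.cosh t * Real.cosh t' * (Real.cosh (s' - s) - 1) + 1
      ≤ -(mink (PP s t) (PP s' t')) := by
    rw [← hcs]; exact c_lower s t s' t'
  have h1c : 1 ≤ -(mink (PP s t) (PP s' t')) := le_trans (Real.one_le_cosh _) hc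
  have hd : s' - s ≤ hdist (PP s t) (PP s' t') := by
    rw [show hdist (PP s t) (PP s' t') = acosh (-(mink (PP s t) (PP s' t'))) from rfl]
    calc s' - s = acosh (Real.cosh (s' - s)) := (acosh_cosh_s8 (by linarith)).symm
    _ ≤ acosh (-(mink (PP s t) (PP s' t'))) := acosh_mono (Real.one_le_cosh _) hc
  have hsq : Real.cosh t * Real.cosh t' * (Real.cosh (s' - s) - 1)
      ≤ Real.sqrt ((mink (PP s t) (PP s' t'))^2 - 1) := by
    have e : (mink (PP s t) (PP s' t'))^2 = (-(mink (PP s t) (PP s' t')))^2 := by ring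
    rw [e]
    calc Real.cosh t * Real.cosh t' * (Real.cosh (s' - s) - 1)
        ≤ -(mink (PP s t) (PP s' t')) - 1 := by linarith
    _ ≤ Real.sqrt ((-(mink (PP s t) (PP s' t')))^2 - 1) := sub_one_le_sqrt h1c
  have hBnn : 0 ≤ Real.cosh t * Real.cosh t' * (Real.cosh (s' - s) - 1) :=
    mul_nonneg (mul_nonneg (Real.cosh_pos t).le (Real.cosh_pos t').le)
      (by linarith [Real.one_le_cosh (s' - s)])
  calc (-k) * (s' - s) * (Real.cosh t * Real.cosh t' * (Real.cosh (s' - s) - 1))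
      ≤ ((-k) * hdist (PP s t) (PP s' t'))
        * Real.sqrt ((mink (PP s t) (PP s' t'))^2 - 1) := by
        apply mul_le_mul (mul_le_mul_of_nonneg_left hd hk'.le) hsq hBnn
        exact mul_nonneg hk'.le (by linarith)
  _ ≤ _ := hst

lemma star_far {k : ℝ} (hk : k < 0) {X : Set (V × V)} (hX : IsConvexField X)
    (hlip : LipschitzField k X) {s t s' t' : ℝ} {x x' : V} (hss : s + 2 ≤ s')
    (hx : (PP s t, x) ∈ X) (hx' : (PP s' t', x') ∈ X)
    (hf : mink x (TT s t) = 0) (hf' : mink x' (TT s' t') = 0)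
    (hsmall : mink x (NN s) < (-k) * (s' - s) / 2) :
    mink x' (NN s') < 0 := by
  have hss' : s < s' := by linarith
  have hstar := star_strong hk hX hlip hss' hx hx' hf hf'
  have hk' : (0:ℝ) < -k := by linarith
  have hsh : 0 < Real.sinh (s' - s) := Real.sinh_pos_iff.mpr (by linarith)
  have hhalf : Real.sinh (s' - s) / 2 ≤ Real.cosh (s' - s) - 1 := sinh_half_le (by linarith)
  have e1 : Real.cosh t' * (Real.sinh (s' - s) / 2)
      ≤ Real.cosh t * Real.cosh t' * (Real.cosh (s' - s) - 1) := by
    nlinarith [Real.one_le_cosh t, Real.cosh_pos t', hsh,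
      mul_nonneg (Real.cosh_pos t').le (show (0:ℝ) ≤ Real.cosh (s' - s) - 1 - Real.sinh (s' - s)/2 by linarith),
      mul_nonneg (mul_nonneg (show (0:ℝ) ≤ Real.cosh t - 1 by linarith [Real.one_le_cosh t]) (Real.cosh_pos t').le)
        (show (0:ℝ) ≤ Real.cosh (s' - s) - 1 by linarith)]
  have e2 := mul_le_mul_of_nonneg_left e1 (mul_nonneg hk'.le (by linarith) : (0:ℝ) ≤ (-k) * (s' - s))
  by_contra h0
  push_neg at h0
  have w1 : 0 ≤ mink x' (NN s') * Real.cosh t * Real.sinh (s' - s) :=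
    mul_nonneg (mul_nonneg h0 (Real.cosh_pos t).le) hsh.le
  have key : ((-k) * (s' - s) / 2) * (Real.cosh t' * Real.sinh (s' - s))
      ≤ mink x (NN s) * (Real.cosh t' * Real.sinh (s' - s)) := by nlinarith [hstar, e2, w1]
  have := le_of_mul_le_mul_right
    (by nlinarith [key] : ((-k) * (s' - s) / 2) * (Real.cosh t' * Real.sinh (s' - s))
      ≤ mink x (NN s) * (Real.cosh t' * Real.sinh (s' - s)))
    (mul_pos (Real.cosh_pos t') hsh)
  linarith

lemma star_far' {k : ℝ} (hk : k < 0) {X : Set (V × V)} (hX : IsConvexField X)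
    (hlip : LipschitzField k X) {s t s' t' : ℝ} {x x' : V} (hss : s + 2 ≤ s')
    (hx : (PP s t, x) ∈ X) (hx' : (PP s' t', x') ∈ X)
    (hf : mink x (TT s t) = 0) (hf' : mink x' (TT s' t') = 0)
    (hbig : -((-k) * (s' - s)) / 2 < mink x' (NN s')) :
    0 < mink x (NN s) := by
  have hss' : s < s' := by linarith
  have hstar := star_strong hk hX hlip hss' hx hx' hf hf'
  have hk' : (0:ℝ) < -k := by linarith
  have hsh : 0 < Real.sinh (s' - s) := Real.sinh_pos_iff.mpr (by linarith)
  have hhalf : Real.sinh (s' - s) / 2 ≤ Real.cosh (s' - s) - 1 := sinh_half_le (by linarith)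
  have e1 : Real.cosh t * (Real.sinh (s' - s) / 2)
      ≤ Real.cosh t * Real.cosh t' * (Real.cosh (s' - s) - 1) := by
    nlinarith [Real.one_le_cosh t', Real.cosh_pos t, hsh,
      mul_nonneg (Real.cosh_pos t).le (show (0:ℝ) ≤ Real.cosh (s' - s) - 1 - Real.sinh (s' - s)/2 by linarith),
      mul_nonneg (mul_nonneg (show (0:ℝ) ≤ Real.cosh t' - 1 by linarith [Real.one_le_cosh t']) (Real.cosh_pos t).le)
        (show (0:ℝ) ≤ Real.cosh (s' - s) - 1 by linarith)]
  have e2 := mul_le_mul_of_nonneg_left e1 (mul_nonneg hk'.le (by linarith) : (0:ℝ) ≤ (-k) * (s' - s))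
  by_contra h0
  push_neg at h0
  have w1 : mink x (NN s) * Real.cosh t' * Real.sinh (s' - s) ≤ 0 :=
    mul_nonpos_of_nonpos_of_nonneg (mul_nonpos_of_nonpos_of_nonneg h0 (Real.cosh_pos t').le) hsh.le
  have key : mink x' (NN s') * (Real.cosh t * Real.sinh (s' - s))
      ≤ (-((-k) * (s' - s)) / 2) * (Real.cosh t * Real.sinh (s' - s)) := by
    nlinarith [hstar, e2, w1]
  have := le_of_mul_le_mul_right key (mul_pos (Real.cosh_pos t) hsh)
  linarith
open Filter Topology in
lemma tendsto_cosh {f : ℕ → ℝ} {a : ℝ} (h : Tendsto f atTop (nhds a)) :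
    Tendsto (fun n => Real.cosh (f n)) atTop (nhds (Real.cosh a)) :=
  (Real.continuous_cosh.tendsto a).comp h

open Filter Topology in
lemma tendsto_sinh {f : ℕ → ℝ} {a : ℝ} (h : Tendsto f atTop (nhds a)) :
    Tendsto (fun n => Real.sinh (f n)) atTop (nhds (Real.sinh a)) :=
  (Real.continuous_sinh.tendsto a).comp h

open Filter Topology in
lemma tendsto_PP {s t : ℕ → ℝ} {a b : ℝ} (hs : Tendsto s atTop (nhds a))
    (ht : Tendsto t atTop (nhds b)) :
    Tendsto (fun n => PP (s n) (t n)) atTop (nhds (PP a b)) := by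
  rw [tendsto_pi_nhds]
  intro i
  fin_cases i
  · show Tendsto (fun n => PP (s n) (t n) 0) atTop (nhds (PP a b 0))
    simp only [PP, Matrix.cons_val_zero]
    exact (tendsto_cosh ht).mul (tendsto_sinh hs)
  · show Tendsto (fun n => PP (s n) (t n) 1) atTop (nhds (PP a b 1))
    simp only [PP, Matrix.cons_val_one, Matrix.head_cons]
    exact tendsto_sinh ht
  · show Tendsto (fun n => PP (s n) (t n) 2) atTop (nhds (PP a b 2))
    simp only [PP, Matrix.cons_val_two, Matrix.tail_cons, Matrix.head_cons]
    exact (tendsto_cosh ht).mul (tendsto_cosh hs)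

open Filter Topology in
lemma tendsto_TT {s t : ℕ → ℝ} {a b : ℝ} (hs : Tendsto s atTop (nhds a))
    (ht : Tendsto t atTop (nhds b)) :
    Tendsto (fun n => TT (s n) (t n)) atTop (nhds (TT a b)) := by
  rw [tendsto_pi_nhds]
  intro i
  fin_cases i
  · show Tendsto (fun n => TT (s n) (t n) 0) atTop (nhds (TT a b 0))
    simp only [TT, Matrix.cons_val_zero]
    exact (tendsto_sinh ht).mul (tendsto_sinh hs)
  · show Tendsto (fun n => TT (s n) (t n) 1) atTop (nhds (TT a b 1))
    simp only [TT, Matrix.cons_val_one, Matrix.head_cons]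
    exact tendsto_cosh ht
  · show Tendsto (fun n => TT (s n) (t n) 2) atTop (nhds (TT a b 2))
    simp only [TT, Matrix.cons_val_two, Matrix.tail_cons, Matrix.head_cons]
    exact (tendsto_sinh ht).mul (tendsto_cosh hs)

open Filter Topology in
lemma tendsto_NN {s : ℕ → ℝ} {a : ℝ} (hs : Tendsto s atTop (nhds a)) :
    Tendsto (fun n => NN (s n)) atTop (nhds (NN a)) := by
  rw [tendsto_pi_nhds]
  intro i
  fin_cases i
  · show Tendsto (fun n => NN (s n) 0) atTop (nhds (NN a 0))
    simp only [NN, Matrix.cons_val_zero]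
    exact tendsto_cosh hs
  · show Tendsto (fun n => NN (s n) 1) atTop (nhds (NN a 1))
    simp only [NN, Matrix.cons_val_one, Matrix.head_cons]
    exact tendsto_const_nhds
  · show Tendsto (fun n => NN (s n) 2) atTop (nhds (NN a 2))
    simp only [NN, Matrix.cons_val_two, Matrix.tail_cons, Matrix.head_cons]
    exact tendsto_sinh hs

open Filter Topology in
lemma tendsto_mink {y z : ℕ → V} {Y Z : V} (hy : Tendsto y atTop (nhds Y))
    (hz : Tendsto z atTop (nhds Z)) :
    Tendsto (fun n => mink (y n) (z n)) atTop (nhds (mink Y Z)) := by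
  have h : ∀ (i : Fin 3), Tendsto (fun n => y n i) atTop (nhds (Y i)) := by
    intro i; exact (tendsto_pi_nhds.mp hy) i
  have h' : ∀ (i : Fin 3), Tendsto (fun n => z n i) atTop (nhds (Z i)) := by
    intro i; exact (tendsto_pi_nhds.mp hz) i
  simp only [mink]
  exact (((h 0).mul (h' 0)).add ((h 1).mul (h' 1))).sub ((h 2).mul (h' 2))

lemma mink_lin_left (c d : ℝ) (p n w : V) :
    mink (c • p + d • n) w = c * mink p w + d * mink n w := by
  simp only [mink, Pi.add_apply, Pi.smul_apply, smul_eq_mul]; ring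

lemma mink_NN_NN (s s' : ℝ) : mink (NN s) (NN s') = Real.cosh (s - s') := by
  simp only [mink, NN, Real.cosh_sub, Matrix.cons_val_zero, Matrix.cons_val_one,
    Matrix.head_cons, Matrix.cons_val_two, Matrix.tail_cons]
  ring

lemma comb_mem_H2 (a b σ : ℝ) (hσ : σ = 1 ∨ σ = -1) :
    Real.cosh 1 • PP a b + (σ * Real.sinh 1) • NN a ∈ H2 := by
  constructor
  · have e : mink (Real.cosh 1 • PP a b + (σ * Real.sinh 1) • NN a)
        (Real.cosh 1 • PP a b + (σ * Real.sinh 1) • NN a)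
        = Real.cosh 1 ^ 2 * mink (PP a b) (PP a b)
          + 2 * Real.cosh 1 * (σ * Real.sinh 1) * mink (PP a b) (NN a)
          + (σ * Real.sinh 1)^2 * mink (NN a) (NN a) := by
      simp only [mink, Pi.add_apply, Pi.smul_apply, smul_eq_mul]; ring
    rw [e, (PP_mem_H2 a b).1, mink_comm (PP a b) (NN a), mink_NN_PP, mink_NN_NN]
    simp only [sub_self, Real.sinh_zero, Real.cosh_zero, mul_zero, mul_one]
    have := Real.cosh_sq_sub_sinh_sq 1
    rcases hσ with h | h <;> rw [h] <;> nlinarith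
  · show (0:ℝ) < Real.cosh 1 * (PP a b 2) + (σ * Real.sinh 1) * (NN a 2)
    simp only [PP, NN, Matrix.cons_val_two, Matrix.tail_cons, Matrix.head_cons]
    have hb1 : (0:ℝ) ≤ (Real.cosh b - 1) * Real.cosh 1 * Real.cosh a :=
      mul_nonneg (mul_nonneg (by linarith [Real.one_le_cosh b]) (Real.cosh_pos 1).le)
        (Real.cosh_pos a).le
    rcases hσ with h | h <;> rw [h]
    · nlinarith [Real.cosh_pos (1 + a), Real.cosh_add 1 a]
    · nlinarith [Real.cosh_pos (1 - a), Real.cosh_sub 1 a]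

/-- Linear bound extraction: two-sided linear constraints give a component bound. -/
lemma comp_bound {q C u v Ap Bp Am Bm : ℝ} (hq : 0 < q)
    (hAp : 3*q ≤ Ap) (hAm : Am ≤ -(3*q)) (hBp : |Bp| ≤ q) (hBm : |Bm| ≤ q)
    (e1 : -C ≤ Ap*u + Bp*v) (e2 : -C ≤ Am*u + Bm*v) : 3*(q*|u|) ≤ C + q*|v| := by
  have m1 : Bp*v ≤ q*|v| := le_trans (le_abs_self _)
    (by rw [abs_mul]; exact mul_le_mul_of_nonneg_right hBp (abs_nonneg v))
  have m2 : Bm*v ≤ q*|v| := le_trans (le_abs_self _)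
    (by rw [abs_mul]; exact mul_le_mul_of_nonneg_right hBm (abs_nonneg v))
  rcases le_or_gt 0 u with hu | hu
  · rw [abs_of_nonneg hu]
    have h2 : Am*u ≤ -(3*q)*u := mul_le_mul_of_nonneg_right hAm hu
    nlinarith
  · rw [abs_of_neg hu]
    have h1 : Ap*u ≤ 3*q*u := by nlinarith
    nlinarith
open Filter Topology in
lemma constraint_ev {k : ℝ} (hk : k < 0) {X : Set (V × V)} (hX : IsConvexField X)
    (hlip : LipschitzField k X) {a b : ℝ} {s t : ℕ → ℝ} {x : ℕ → V}
    (hs : Tendsto s atTop (nhds a)) (ht : Tendsto t atTop (nhds b))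
    (hmem : ∀ n, (PP (s n) (t n), x n) ∈ X)
    {r y : V} (hr : r ∈ H2) (hy : (r, y) ∈ X) (hlim : mink r (PP a b) < -1) :
    ∀ᶠ n in atTop, -(|mink y (PP a b)| + 1)
      ≤ mink r (TT (s n) (t n)) * mink (x n) (TT (s n) (t n))
        + mink r (NN (s n)) * mink (x n) (NN (s n)) := by
  have h1 : Tendsto (fun n => mink r (PP (s n) (t n))) atTop (nhds (mink r (PP a b))) :=
    tendsto_mink tendsto_const_nhds (tendsto_PP hs ht)
  have hev1 : ∀ᶠ n in atTop, mink r (PP (s n) (t n)) < -1 :=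
    h1.eventually (eventually_lt_nhds hlim)
  have h2 : Tendsto (fun n => mink y (PP (s n) (t n))) atTop (nhds (mink y (PP a b))) :=
    tendsto_mink tendsto_const_nhds (tendsto_PP hs ht)
  have hev2 : ∀ᶠ n in atTop, mink y (PP (s n) (t n)) ≤ |mink y (PP a b)| + 1 :=
    h2.eventually (eventually_le_nhds (by linarith [le_abs_self (mink y (PP a b))]))
  filter_upwards [hev1, hev2] with n h1n h2n
  have hne : r ≠ PP (s n) (t n) := PP_ne_of_mink (PP_mem_H2 _ _) h1n
  have hA := lemA hX hlip hy (hmem n) hne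
  have hpos := (lemA_pos hk hr (PP_mem_H2 _ _) hne).le
  have htan : mink (x n) (PP (s n) (t n)) = 0 := (hX.2.1 _ (hmem n)).2
  have hexp : mink r (x n) = mink r (TT (s n) (t n)) * mink (x n) (TT (s n) (t n))
      + mink r (NN (s n)) * mink (x n) (NN (s n)) := by
    rw [mink_comm r (x n), mink_expand (s n) (t n) (x n) r, htan]
    ring
  rw [← hexp]
  linarith

open Filter Topology in
lemma seq_conv {k : ℝ} (hk : k < 0) {X : Set (V × V)} (hX : IsConvexField X)
    (hdef : DefinedOver X H2) (hlip : LipschitzField k X)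
    {a b : ℝ} {s t : ℕ → ℝ} {x : ℕ → V}
    (hs : Tendsto s atTop (nhds a)) (ht : Tendsto t atTop (nhds b))
    (hmem : ∀ n, (PP (s n) (t n), x n) ∈ X) :
    ∃ (z : V) (φ : ℕ → ℕ), StrictMono φ ∧ (PP a b, z) ∈ X ∧
      Tendsto (fun n => x (φ n)) atTop (nhds z) := by
  have hsh1 : 0 < Real.sinh 1 := Real.sinh_pos_iff.mpr (by norm_num)
  set q : ℝ := Real.sinh 1 / 4 with hqdef
  have hq : 0 < q := by positivity
  -- references
  obtain ⟨y1, hy1⟩ := hdef _ (PP_mem_H2 a (b+1))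
  obtain ⟨y2, hy2⟩ := hdef _ (PP_mem_H2 a (b-1))
  have hr3 : Real.cosh 1 • PP a b + (1 * Real.sinh 1) • NN a ∈ H2 :=
    comb_mem_H2 a b 1 (Or.inl rfl)
  have hr4 : Real.cosh 1 • PP a b + (-1 * Real.sinh 1) • NN a ∈ H2 :=
    comb_mem_H2 a b (-1) (Or.inr rfl)
  obtain ⟨y3, hy3⟩ := hdef _ hr3
  obtain ⟨y4, hy4⟩ := hdef _ hr4
  set r1 : V := PP a (b+1) with hr1def
  set r2 : V := PP a (b-1) with hr2def
  set r3 : V := Real.cosh 1 • PP a b + (1 * Real.sinh 1) • NN a with hr3def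
  set r4 : V := Real.cosh 1 • PP a b + (-1 * Real.sinh 1) • NN a with hr4def
  have hchb1 : 1 < Real.cosh (1:ℝ) := Real.one_lt_cosh.mpr (by norm_num)
  -- limits of the pairing with PP a b
  have hlim1 : mink r1 (PP a b) < -1 := by
    rw [hr1def, mink_PP_PP]
    simp only [sub_self, Real.cosh_zero, mul_one]
    have : Real.cosh (b+1) * Real.cosh b - Real.sinh (b+1) * Real.sinh b
        = Real.cosh ((b+1) - b) := (Real.cosh_sub _ _).symm
    have e : ((b:ℝ)+1) - b = 1 := by ring
    rw [e] at this
    linarith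
  have hlim2 : mink r2 (PP a b) < -1 := by
    rw [hr2def, mink_PP_PP]
    simp only [sub_self, Real.cosh_zero, mul_one]
    have : Real.cosh (b-1) * Real.cosh b - Real.sinh (b-1) * Real.sinh b
        = Real.cosh ((b-1) - b) := (Real.cosh_sub _ _).symm
    have e : ((b:ℝ)-1) - b = -1 := by ring
    rw [e, Real.cosh_neg] at this
    linarith
  have hlim3 : mink r3 (PP a b) < -1 := by
    rw [hr3def, mink_lin_left, (PP_mem_H2 a b).1, mink_NN_PP]
    simp only [sub_self, Real.sinh_zero, mul_zero, zero_mul, add_zero, mul_neg_one]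
    linarith
  have hlim4 : mink r4 (PP a b) < -1 := by
    rw [hr4def, mink_lin_left, (PP_mem_H2 a b).1, mink_NN_PP]
    simp only [sub_self, Real.sinh_zero, mul_zero, zero_mul, add_zero, mul_neg_one]
    linarith
  -- constraints
  have E1 := constraint_ev hk hX hlip hs ht hmem (PP_mem_H2 a (b+1)) hy1 hlim1
  have E2 := constraint_ev hk hX hlip hs ht hmem (PP_mem_H2 a (b-1)) hy2 hlim2
  have E3 := constraint_ev hk hX hlip hs ht hmem hr3 hy3 hlim3
  have E4 := constraint_ev hk hX hlip hs ht hmem hr4 hy4 hlim4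
  -- coefficient limits
  have hsa : Tendsto (fun n => s n - a) atTop (nhds 0) := by
    simpa using hs.sub_const a
  have TA1 : Tendsto (fun n => mink r1 (TT (s n) (t n))) atTop (nhds (Real.sinh 1)) := by
    have hfun : (fun n => mink r1 (TT (s n) (t n)))
        = fun n => Real.cosh (t n) * Real.sinh (b+1)
          - Real.sinh (t n) * Real.cosh (b+1) * Real.cosh ((s n) - a) := by
      funext n
      rw [hr1def, mink_comm, mink_TT_PP]
    rw [hfun]
    have hval : Real.cosh b * Real.sinh (b+1)
        - Real.sinh b * Real.cosh (b+1) * Real.cosh (0:ℝ) = Real.sinh 1 := by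
      rw [Real.cosh_zero, mul_one]
      have : Real.sinh ((b+1) - b) = Real.sinh (b+1) * Real.cosh b
          - Real.cosh (b+1) * Real.sinh b := Real.sinh_sub _ _
      have e : ((b:ℝ)+1) - b = 1 := by ring
      rw [e] at this
      linarith
    rw [← hval]
    exact ((tendsto_cosh ht).mul tendsto_const_nhds).sub
      (((tendsto_sinh ht).mul tendsto_const_nhds).mul (tendsto_cosh hsa))
  have TA2 : Tendsto (fun n => mink r2 (TT (s n) (t n))) atTop (nhds (-Real.sinh 1)) := by
    have hfun : (fun n => mink r2 (TT (s n) (t n)))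
        = fun n => Real.cosh (t n) * Real.sinh (b-1)
          - Real.sinh (t n) * Real.cosh (b-1) * Real.cosh ((s n) - a) := by
      funext n
      rw [hr2def, mink_comm, mink_TT_PP]
    rw [hfun]
    have hval : Real.cosh b * Real.sinh (b-1)
        - Real.sinh b * Real.cosh (b-1) * Real.cosh (0:ℝ) = -Real.sinh 1 := by
      rw [Real.cosh_zero, mul_one]
      have : Real.sinh ((b-1) - b) = Real.sinh (b-1) * Real.cosh b
          - Real.cosh (b-1) * Real.sinh b := Real.sinh_sub _ _
      have e : ((b:ℝ)-1) - b = -1 := by ring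
      rw [e, Real.sinh_neg] at this
      linarith
    rw [← hval]
    exact ((tendsto_cosh ht).mul tendsto_const_nhds).sub
      (((tendsto_sinh ht).mul tendsto_const_nhds).mul (tendsto_cosh hsa))
  have TB1 : Tendsto (fun n => mink r1 (NN (s n))) atTop (nhds 0) := by
    have hfun : (fun n => mink r1 (NN (s n)))
        = fun n => Real.cosh (b+1) * Real.sinh (a - s n) := by
      funext n
      rw [hr1def, mink_comm, mink_NN_PP]
    rw [hfun]
    have h0 : Tendsto (fun n => a - s n) atTop (nhds 0) := by
      simpa using (tendsto_const_nhds (x := a)).sub hs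
    simpa using (tendsto_const_nhds (x := Real.cosh (b+1))).mul (tendsto_sinh h0)
  have TB2 : Tendsto (fun n => mink r2 (NN (s n))) atTop (nhds 0) := by
    have hfun : (fun n => mink r2 (NN (s n)))
        = fun n => Real.cosh (b-1) * Real.sinh (a - s n) := by
      funext n
      rw [hr2def, mink_comm, mink_NN_PP]
    rw [hfun]
    have h0 : Tendsto (fun n => a - s n) atTop (nhds 0) := by
      simpa using (tendsto_const_nhds (x := a)).sub hs
    simpa using (tendsto_const_nhds (x := Real.cosh (b-1))).mul (tendsto_sinh h0)
  have TA3 : Tendsto (fun n => mink r3 (TT (s n) (t n))) atTop (nhds 0) := by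
    have hfun : (fun n => mink r3 (TT (s n) (t n)))
        = fun n => Real.cosh 1 * (Real.cosh (t n) * Real.sinh b
            - Real.sinh (t n) * Real.cosh b * Real.cosh (s n - a))
          + 1 * Real.sinh 1 * (Real.sinh (t n) * Real.sinh (s n - a)) := by
      funext n
      rw [hr3def, mink_lin_left,
        show mink (PP a b) (TT (s n) (t n)) = mink (TT (s n) (t n)) (PP a b) from mink_comm _ _,
        mink_TT_PP, mink_NN_TT]
    rw [hfun]
    have hval : Real.cosh 1 * (Real.cosh b * Real.sinh b
        - Real.sinh b * Real.cosh b * Real.cosh (0:ℝ))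
        + 1 * Real.sinh 1 * (Real.sinh b * Real.sinh (0:ℝ)) = 0 := by
      rw [Real.cosh_zero, Real.sinh_zero]; ring
    rw [← hval]
    exact ((tendsto_const_nhds (x := Real.cosh 1)).mul (((tendsto_cosh ht).mul
        (tendsto_const_nhds (x := Real.sinh b))).sub (((tendsto_sinh ht).mul
        (tendsto_const_nhds (x := Real.cosh b))).mul (tendsto_cosh hsa)))).add
      ((tendsto_const_nhds (x := 1 * Real.sinh 1)).mul ((tendsto_sinh ht).mul (tendsto_sinh hsa)))
  have TA4 : Tendsto (fun n => mink r4 (TT (s n) (t n))) atTop (nhds 0) := by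
    have hfun : (fun n => mink r4 (TT (s n) (t n)))
        = fun n => Real.cosh 1 * (Real.cosh (t n) * Real.sinh b
            - Real.sinh (t n) * Real.cosh b * Real.cosh (s n - a))
          + (-1) * Real.sinh 1 * (Real.sinh (t n) * Real.sinh (s n - a)) := by
      funext n
      rw [hr4def, mink_lin_left,
        show mink (PP a b) (TT (s n) (t n)) = mink (TT (s n) (t n)) (PP a b) from mink_comm _ _,
        mink_TT_PP, mink_NN_TT]
    rw [hfun]
    have hval : Real.cosh 1 * (Real.cosh b * Real.sinh b
        - Real.sinh b * Real.cosh b * Real.cosh (0:ℝ))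
        + (-1) * Real.sinh 1 * (Real.sinh b * Real.sinh (0:ℝ)) = 0 := by
      rw [Real.cosh_zero, Real.sinh_zero]; ring
    rw [← hval]
    exact ((tendsto_const_nhds (x := Real.cosh 1)).mul (((tendsto_cosh ht).mul
        (tendsto_const_nhds (x := Real.sinh b))).sub (((tendsto_sinh ht).mul
        (tendsto_const_nhds (x := Real.cosh b))).mul (tendsto_cosh hsa)))).add
      ((tendsto_const_nhds (x := (-1) * Real.sinh 1)).mul ((tendsto_sinh ht).mul (tendsto_sinh hsa)))
  have TB3 : Tendsto (fun n => mink r3 (NN (s n))) atTop (nhds (Real.sinh 1)) := by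
    have hfun : (fun n => mink r3 (NN (s n)))
        = fun n => Real.cosh 1 * (Real.cosh b * Real.sinh (a - s n))
          + 1 * Real.sinh 1 * Real.cosh (a - s n) := by
      funext n
      rw [hr3def, mink_lin_left,
        show mink (PP a b) (NN (s n)) = mink (NN (s n)) (PP a b) from mink_comm _ _,
        mink_NN_PP, mink_NN_NN]
    rw [hfun]
    have h0 : Tendsto (fun n => a - s n) atTop (nhds 0) := by
      simpa using (tendsto_const_nhds (x := a)).sub hs
    have hval : Real.cosh 1 * (Real.cosh b * Real.sinh (0:ℝ))
        + 1 * Real.sinh 1 * Real.cosh (0:ℝ) = Real.sinh 1 := by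
      rw [Real.cosh_zero, Real.sinh_zero]; ring
    have H := ((tendsto_const_nhds (x := Real.cosh 1)).mul ((tendsto_const_nhds (x := Real.cosh b)).mul
        (tendsto_sinh h0))).add ((tendsto_const_nhds (x := 1 * Real.sinh 1)).mul (tendsto_cosh h0))
    rwa [hval] at H
  have TB4 : Tendsto (fun n => mink r4 (NN (s n))) atTop (nhds (-Real.sinh 1)) := by
    have hfun : (fun n => mink r4 (NN (s n)))
        = fun n => Real.cosh 1 * (Real.cosh b * Real.sinh (a - s n))
          + (-1) * Real.sinh 1 * Real.cosh (a - s n) := by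
      funext n
      rw [hr4def, mink_lin_left,
        show mink (PP a b) (NN (s n)) = mink (NN (s n)) (PP a b) from mink_comm _ _,
        mink_NN_PP, mink_NN_NN]
    rw [hfun]
    have h0 : Tendsto (fun n => a - s n) atTop (nhds 0) := by
      simpa using (tendsto_const_nhds (x := a)).sub hs
    have hval : Real.cosh 1 * (Real.cosh b * Real.sinh (0:ℝ))
        + (-1) * Real.sinh 1 * Real.cosh (0:ℝ) = -Real.sinh 1 := by
      rw [Real.cosh_zero, Real.sinh_zero]; ring
    have H := ((tendsto_const_nhds (x := Real.cosh 1)).mul ((tendsto_const_nhds (x := Real.cosh b)).mul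
        (tendsto_sinh h0))).add ((tendsto_const_nhds (x := (-1) * Real.sinh 1)).mul (tendsto_cosh h0))
    rwa [hval] at H
  -- eventual coefficient bounds
  have evA1 : ∀ᶠ n in atTop, 3*q ≤ mink r1 (TT (s n) (t n)) :=
    TA1.eventually (eventually_ge_nhds (by rw [hqdef]; linarith))
  have evA2 : ∀ᶠ n in atTop, mink r2 (TT (s n) (t n)) ≤ -(3*q) :=
    TA2.eventually (eventually_le_nhds (by rw [hqdef]; linarith))
  have evB1 : ∀ᶠ n in atTop, |mink r1 (NN (s n))| ≤ q :=
    (TB1.abs).eventually (eventually_le_nhds (by simpa using hq))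
  have evB2 : ∀ᶠ n in atTop, |mink r2 (NN (s n))| ≤ q :=
    (TB2.abs).eventually (eventually_le_nhds (by simpa using hq))
  have evA3 : ∀ᶠ n in atTop, |mink r3 (TT (s n) (t n))| ≤ q :=
    (TA3.abs).eventually (eventually_le_nhds (by simpa using hq))
  have evA4 : ∀ᶠ n in atTop, |mink r4 (TT (s n) (t n))| ≤ q :=
    (TA4.abs).eventually (eventually_le_nhds (by simpa using hq))
  have evB3 : ∀ᶠ n in atTop, 3*q ≤ mink r3 (NN (s n)) :=
    TB3.eventually (eventually_ge_nhds (by rw [hqdef]; linarith))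
  have evB4 : ∀ᶠ n in atTop, mink r4 (NN (s n)) ≤ -(3*q) :=
    TB4.eventually (eventually_le_nhds (by rw [hqdef]; linarith))
  -- norm bounds
  have evT : ∀ᶠ n in atTop, ‖TT (s n) (t n)‖ ≤ ‖TT a b‖ + 1 :=
    ((tendsto_TT hs ht).norm).eventually (eventually_le_nhds (lt_add_one _))
  have evN : ∀ᶠ n in atTop, ‖NN (s n)‖ ≤ ‖NN a‖ + 1 :=
    ((tendsto_NN hs).norm).eventually (eventually_le_nhds (lt_add_one _))
  set C : ℝ := |mink y1 (PP a b)| + |mink y2 (PP a b)| + |mink y3 (PP a b)|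
      + |mink y4 (PP a b)| + 1 with hCdef
  have hCpos : 0 < C := by
    rw [hCdef]
    positivity
  set C0 : ℝ := C/(2*q) * (‖TT a b‖ + 1) + C/(2*q) * (‖NN a‖ + 1) with hC0def
  have hbound : ∀ᶠ n in atTop, ‖x n‖ ≤ C0 := by
    filter_upwards [E1, E2, E3, E4, evA1, evA2, evB1, evB2, evA3, evA4, evB3, evB4, evT, evN]
      with n e1 e2 e3 e4 a1 a2 b1 b2 a3 a4 b3 b4 hT hN
    set u : ℝ := mink (x n) (TT (s n) (t n)) with hu
    set v : ℝ := mink (x n) (NN (s n)) with hv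
    have c1 : -C ≤ mink r1 (TT (s n) (t n)) * u + mink r1 (NN (s n)) * v := by
      refine le_trans ?_ e1
      rw [hCdef]
      have := abs_nonneg (mink y2 (PP a b))
      have := abs_nonneg (mink y3 (PP a b))
      have := abs_nonneg (mink y4 (PP a b))
      linarith
    have c2 : -C ≤ mink r2 (TT (s n) (t n)) * u + mink r2 (NN (s n)) * v := by
      refine le_trans ?_ e2
      rw [hCdef]
      have := abs_nonneg (mink y1 (PP a b))
      have := abs_nonneg (mink y3 (PP a b))
      have := abs_nonneg (mink y4 (PP a b))
      linarith
    have c3 : -C ≤ mink r3 (TT (s n) (t n)) * u + mink r3 (NN (s n)) * v := by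
      refine le_trans ?_ e3
      rw [hCdef]
      have := abs_nonneg (mink y1 (PP a b))
      have := abs_nonneg (mink y2 (PP a b))
      have := abs_nonneg (mink y4 (PP a b))
      linarith
    have c4 : -C ≤ mink r4 (TT (s n) (t n)) * u + mink r4 (NN (s n)) * v := by
      refine le_trans ?_ e4
      rw [hCdef]
      have := abs_nonneg (mink y1 (PP a b))
      have := abs_nonneg (mink y2 (PP a b))
      have := abs_nonneg (mink y3 (PP a b))
      linarith
    have hU := comp_bound hq a1 a2 b1 b2 c1 c2
    have hV := comp_bound hq b3 b4 a3 a4 (by linarith [c3] : -C ≤ mink r3 (NN (s n)) * v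
      + mink r3 (TT (s n) (t n)) * u) (by linarith [c4] : -C ≤ mink r4 (NN (s n)) * v
      + mink r4 (TT (s n) (t n)) * u)
    have hUC : |u| ≤ C/(2*q) := by
      rw [le_div_iff₀ (by linarith : (0:ℝ) < 2*q)]
      linarith
    have hVC : |v| ≤ C/(2*q) := by
      rw [le_div_iff₀ (by linarith : (0:ℝ) < 2*q)]
      linarith
    have htan : mink (x n) (PP (s n) (t n)) = 0 := (hX.2.1 _ (hmem n)).2
    have hxeq : x n = u • TT (s n) (t n) + v • NN (s n) := by
      have hbe := basis_expansion (s n) (t n) (x n)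
      rw [htan] at hbe
      rw [zero_smul, sub_zero] at hbe
      exact hbe
    calc ‖x n‖ = ‖u • TT (s n) (t n) + v • NN (s n)‖ := by rw [← hxeq]
    _ ≤ ‖u • TT (s n) (t n)‖ + ‖v • NN (s n)‖ := norm_add_le _ _
    _ = |u| * ‖TT (s n) (t n)‖ + |v| * ‖NN (s n)‖ := by
        rw [norm_smul, norm_smul, Real.norm_eq_abs, Real.norm_eq_abs]
    _ ≤ C/(2*q) * (‖TT a b‖ + 1) + C/(2*q) * (‖NN a‖ + 1) := by
        have h1 : |u| * ‖TT (s n) (t n)‖ ≤ C/(2*q) * (‖TT a b‖ + 1) :=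
          mul_le_mul hUC (by linarith) (norm_nonneg _) (by positivity)
        have h2 : |v| * ‖NN (s n)‖ ≤ C/(2*q) * (‖NN a‖ + 1) :=
          mul_le_mul hVC (by linarith) (norm_nonneg _) (by positivity)
        linarith
  rw [eventually_atTop] at hbound
  obtain ⟨N, hN⟩ := hbound
  have hx' : ∀ n, x (n + N) ∈ Metric.closedBall (0:V) C0 := fun n => by
    rw [Metric.mem_closedBall, dist_zero_right]
    exact hN (n + N) (Nat.le_add_left N n)
  obtain ⟨z, _, ψ, hψ, hconv⟩ :=
    tendsto_subseq_of_bounded Metric.isBounded_closedBall hx'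
  have hψtop : Tendsto (fun n => ψ n + N) atTop atTop :=
    tendsto_atTop_mono (fun n => Nat.le_add_right (ψ n) N) hψ.tendsto_atTop
  refine ⟨z, fun n => ψ n + N, fun m n h => Nat.add_lt_add_right (hψ h) N, ?_, hconv⟩
  exact hX.1.mem_of_tendsto ((tendsto_PP (hs.comp hψtop) (ht.comp hψtop)).prodMk_nhds hconv)
    (Eventually.of_forall (fun n => hmem _))
open Filter Topology in
lemma level1_exists {k : ℝ} (hk : k < 0) {X : Set (V × V)} (hX : IsConvexField X)
    (hdef : DefinedOver X H2) (hlip : LipschitzField k X) (s : ℝ) :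
    ∃ t z, (PP s t, z) ∈ X ∧ mink z (TT s t) = 0 := by
  have hk' : (0:ℝ) < -k := by linarith
  set A := {t : ℝ | ∃ z, (PP s t, z) ∈ X ∧ 0 < mink z (TT s t)} with hAdef
  obtain ⟨x0, hx0⟩ := hdef _ (PP_mem_H2 s 0)
  set M := mink x0 (TT s 0) with hMdef
  have hAne : A.Nonempty := by
    refine ⟨-(|M|/(-k) + 1), ?_⟩
    obtain ⟨z1, hz1⟩ := hdef _ (PP_mem_H2 s (-(|M|/(-k) + 1)))
    refine ⟨z1, hz1, ?_⟩
    have ht1 : -(|M|/(-k) + 1) < 0 := by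
      have : 0 ≤ |M|/(-k) := div_nonneg (abs_nonneg M) hk'.le
      linarith
    have hB := lemB hX hlip ht1 hz1 hx0
    have h2 : (-k) * (|M|/(-k)) = |M| := by rw [mul_comm]; exact div_mul_cancel₀ _ (ne_of_gt hk')
    have h3 : (-k) * (0 - -(|M|/(-k) + 1)) = (-k) * (|M|/(-k)) + (-k) := by ring
    rw [h3, h2] at hB
    have := neg_abs_le M
    linarith
  have hAbdd : BddAbove A := by
    refine ⟨|M|/(-k), fun u hu => ?_⟩
    obtain ⟨z, hz, hzpos⟩ := hu
    rcases le_or_gt u 0 with h | h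
    · exact le_trans h (div_nonneg (abs_nonneg M) hk'.le)
    · have hB := lemB hX hlip h hx0 hz
      have : (-k) * u ≤ |M| := by
        have := le_abs_self M
        linarith
      exact (le_div_iff₀' hk').mpr this
  set t0 := sSup A with ht0def
  -- sequences from the left
  have hlow : ∀ u, u < t0 → ∀ z, (PP s u, z) ∈ X → 0 < mink z (TT s u) := by
    intro u hu z hz
    obtain ⟨a, ha, hua⟩ := exists_lt_of_lt_csSup hAne hu
    obtain ⟨za, hza, hzapos⟩ := ha
    have hB := lemB hX hlip hua hz hza
    nlinarith
  have hhigh : ∀ u, t0 < u → ∀ z, (PP s u, z) ∈ X → mink z (TT s u) ≤ 0 := by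
    intro u hu z hz
    by_contra h
    push_neg at h
    have : u ∈ A := ⟨z, hz, h⟩
    have := le_csSup hAbdd this
    linarith
  have hposseq : ∀ n : ℕ, (0:ℝ) < 1/(n+1) := by
    intro n; positivity
  -- left limit
  have hchoiceL : ∀ n : ℕ, ∃ z, (PP s (t0 - 1/(n+1)), z) ∈ X
      ∧ 0 < mink z (TT s (t0 - 1/(n+1))) := by
    intro n
    obtain ⟨z, hz⟩ := hdef _ (PP_mem_H2 s (t0 - 1/(n+1)))
    exact ⟨z, hz, hlow _ (by linarith [hposseq n]) z hz⟩
  choose zL hzL hzLpos using hchoiceL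
  have htL : Tendsto (fun n : ℕ => t0 - 1/(n+1)) atTop (nhds t0) := by
    have h0 : Tendsto (fun n : ℕ => 1/((n:ℝ)+1)) atTop (nhds 0) :=
      tendsto_one_div_add_atTop_nhds_zero_nat
    simpa using (tendsto_const_nhds (x := t0)).sub h0
  obtain ⟨zA, φA, hφA, hzAmem, hzAconv⟩ :=
    seq_conv hk hX hdef hlip (tendsto_const_nhds (x := s)) htL hzL
  have hcompA : 0 ≤ mink zA (TT s t0) := by
    have hT : Tendsto (fun n => mink (zL (φA n)) (TT s (t0 - 1/(φA n+1)))) atTop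
        (nhds (mink zA (TT s t0))) :=
      tendsto_mink hzAconv (tendsto_TT tendsto_const_nhds (htL.comp hφA.tendsto_atTop))
    exact ge_of_tendsto' hT (fun n => (hzLpos (φA n)).le)
  -- right limit
  have hchoiceR : ∀ n : ℕ, ∃ z, (PP s (t0 + 1/(n+1)), z) ∈ X
      ∧ mink z (TT s (t0 + 1/(n+1))) ≤ 0 := by
    intro n
    obtain ⟨z, hz⟩ := hdef _ (PP_mem_H2 s (t0 + 1/(n+1)))
    exact ⟨z, hz, hhigh _ (by linarith [hposseq n]) z hz⟩
  choose zR hzR hzRneg using hchoiceR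
  have htR : Tendsto (fun n : ℕ => t0 + 1/(n+1)) atTop (nhds t0) := by
    have h0 : Tendsto (fun n : ℕ => 1/((n:ℝ)+1)) atTop (nhds 0) :=
      tendsto_one_div_add_atTop_nhds_zero_nat
    simpa using (tendsto_const_nhds (x := t0)).add h0
  obtain ⟨zB, φB, hφB, hzBmem, hzBconv⟩ :=
    seq_conv hk hX hdef hlip (tendsto_const_nhds (x := s)) htR hzR
  have hcompB : mink zB (TT s t0) ≤ 0 := by
    have hT : Tendsto (fun n => mink (zR (φB n)) (TT s (t0 + 1/(φB n+1)))) atTop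
        (nhds (mink zB (TT s t0))) :=
      tendsto_mink hzBconv (tendsto_TT tendsto_const_nhds (htR.comp hφB.tendsto_atTop))
    exact le_of_tendsto' hT (fun n => hzRneg (φB n))
  -- convex combination
  set c1 := mink zA (TT s t0) with hc1
  set c2 := mink zB (TT s t0) with hc2
  rcases eq_or_lt_of_le hcompA with h1 | h1
  · exact ⟨t0, zA, hzAmem, h1.symm⟩
  rcases eq_or_lt_of_le hcompB with h2 | h2
  · exact ⟨t0, zB, hzBmem, h2⟩
  have hconv := hX.2.2 (PP s t0)
  set lam := c1/(c1 - c2) with hlam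
  have hden : 0 < c1 - c2 := by linarith
  have hl1 : 0 ≤ 1 - lam := by
    rw [hlam]
    have : c1/(c1-c2) ≤ 1 := by
      rw [div_le_one hden]; linarith
    linarith
  have hl2 : 0 ≤ lam := by positivity
  have hsum : (1 - lam) + lam = 1 := by ring
  have hzmem : ((1-lam) • zA + lam • zB) ∈ {x : V | (PP s t0, x) ∈ X} :=
    hconv hzAmem hzBmem hl1 hl2 hsum
  refine ⟨t0, (1-lam) • zA + lam • zB, hzmem, ?_⟩
  rw [mink_lin_left, ← hc1, ← hc2, hlam]
  field_simp
  ring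

lemma level1_unique {k : ℝ} (hk : k < 0) {X : Set (V × V)} (hX : IsConvexField X)
    (hlip : LipschitzField k X) {s t t' : ℝ} {z z' : V}
    (hz : (PP s t, z) ∈ X) (hf : mink z (TT s t) = 0)
    (hz' : (PP s t', z') ∈ X) (hf' : mink z' (TT s t') = 0) : t = t' := by
  have hk' : (0:ℝ) < -k := by linarith
  rcases lt_trichotomy t t' with h | h | h
  · have hB := lemB hX hlip h hz hz'
    rw [hf, hf'] at hB
    nlinarith
  · exact h
  · have hB := lemB hX hlip h hz' hz
    rw [hf, hf'] at hB
    nlinarith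
lemma zero_of_comps {X : Set (V × V)} (hX : IsConvexField X) {s t : ℝ} {z : V}
    (hz : (PP s t, z) ∈ X) (h1 : mink z (TT s t) = 0) (h2 : mink z (NN s) = 0) : z = 0 := by
  have htan : mink z (PP s t) = 0 := (hX.2.1 _ hz).2
  have hbe := basis_expansion s t z
  rw [h1, h2, htan] at hbe
  simpa using hbe

open Filter Topology in
lemma approach {k : ℝ} (hk : k < 0) {X : Set (V × V)} (hX : IsConvexField X)
    (hdef : DefinedOver X H2) (hlip : LipschitzField k X)
    {sf : ℕ → ℝ} {sstar : ℝ} (hs : Tendsto sf atTop (nhds sstar))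
    {tf : ℕ → ℝ} {zf : ℕ → V}
    (hmem : ∀ n, (PP (sf n) (tf n), zf n) ∈ X)
    (hTcomp : ∀ n, mink (zf n) (TT (sf n) (tf n)) = 0) :
    ∃ that zhat, (PP sstar that, zhat) ∈ X ∧ mink zhat (TT sstar that) = 0 ∧
      ∃ φ : ℕ → ℕ, StrictMono φ ∧
        Tendsto (fun n => mink (zf (φ n)) (NN (sf (φ n)))) atTop
          (nhds (mink zhat (NN sstar))) := by
  have hk' : (0:ℝ) < -k := by linarith
  have hch : ∀ n, ∃ y, (PP (sf n) 0, y) ∈ X := fun n => hdef _ (PP_mem_H2 _ _)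
  choose y hy using hch
  obtain ⟨yhat, φ1, hφ1, hymem, hyconv⟩ :=
    seq_conv hk hX hdef hlip hs (tendsto_const_nhds (x := (0:ℝ))) hy
  set L := mink yhat (TT sstar 0) with hL
  have hcT : Tendsto (fun n => mink (y (φ1 n)) (TT (sf (φ1 n)) 0)) atTop (nhds L) :=
    tendsto_mink hyconv (tendsto_TT (hs.comp hφ1.tendsto_atTop) tendsto_const_nhds)
  have hev : ∀ᶠ n in atTop, |mink (y (φ1 n)) (TT (sf (φ1 n)) 0)| ≤ |L| + 1 :=
    hcT.abs.eventually (eventually_le_nhds (lt_add_one _))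
  rw [eventually_atTop] at hev
  obtain ⟨N, hN⟩ := hev
  set R := (|L| + 1)/(-k) with hR
  have hRpos : 0 < R := div_pos (by positivity) hk'
  have hkR : (-k) * R = |L| + 1 := by
    rw [hR, mul_comm]; exact div_mul_cancel₀ _ (ne_of_gt hk')
  have htb : ∀ n : ℕ, tf (φ1 (n + N)) ∈ Metric.closedBall (0:ℝ) R := by
    intro n
    have hc := hN (n + N) (Nat.le_add_left _ _)
    have habs := abs_le.mp hc
    rw [Metric.mem_closedBall, dist_zero_right, Real.norm_eq_abs, abs_le]
    constructor
    · by_contra hcon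
      push_neg at hcon
      have hneg : tf (φ1 (n + N)) < 0 := by linarith
      have hB := lemB hX hlip hneg (hmem (φ1 (n + N))) (hy (φ1 (n + N)))
      rw [hTcomp (φ1 (n + N))] at hB
      have hmul : (-k) * R < (-k) * (0 - tf (φ1 (n + N))) :=
        mul_lt_mul_of_pos_left (by linarith) hk'
      rw [hkR] at hmul
      linarith
    · by_contra hcon
      push_neg at hcon
      have hposn : 0 < tf (φ1 (n + N)) := by linarith
      have hB := lemB hX hlip hposn (hy (φ1 (n + N))) (hmem (φ1 (n + N)))
      rw [hTcomp (φ1 (n + N))] at hB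
      have hmul : (-k) * R < (-k) * (tf (φ1 (n + N)) - 0) :=
        mul_lt_mul_of_pos_left (by linarith) hk'
      rw [hkR] at hmul
      linarith
  obtain ⟨that, _, ψ, hψ, htconv⟩ := tendsto_subseq_of_bounded Metric.isBounded_closedBall htb
  set Φ : ℕ → ℕ := fun n => φ1 (ψ n + N) with hΦ
  have hΦmono : StrictMono Φ := fun a b h => hφ1 (Nat.add_lt_add_right (hψ h) N)
  have hΦtop : Tendsto Φ atTop atTop := hΦmono.tendsto_atTop
  have hsΦ : Tendsto (fun n => sf (Φ n)) atTop (nhds sstar) := hs.comp hΦtop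
  have htΦ : Tendsto (fun n => tf (Φ n)) atTop (nhds that) := htconv
  obtain ⟨zhat, φ2, hφ2, hzmem, hzconv⟩ :=
    seq_conv hk hX hdef hlip hsΦ htΦ (fun n => hmem (Φ n))
  refine ⟨that, zhat, hzmem, ?_, fun n => Φ (φ2 n), hΦmono.comp hφ2, ?_⟩
  · have hT : Tendsto (fun n => mink (zf (Φ (φ2 n))) (TT (sf (Φ (φ2 n))) (tf (Φ (φ2 n)))))
        atTop (nhds (mink zhat (TT sstar that))) :=
      tendsto_mink hzconv (tendsto_TT (hsΦ.comp hφ2.tendsto_atTop) (htΦ.comp hφ2.tendsto_atTop))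
    have h0 : (fun n => mink (zf (Φ (φ2 n))) (TT (sf (Φ (φ2 n))) (tf (Φ (φ2 n)))))
        = fun _ => (0:ℝ) := funext fun n => hTcomp _
    rw [h0] at hT
    exact (tendsto_nhds_unique tendsto_const_nhds hT).symm
  · exact tendsto_mink hzconv (tendsto_NN (hsΦ.comp hφ2.tendsto_atTop))

open Filter Topology in
lemma exists_zero {k : ℝ} (hk : k < 0) {X : Set (V × V)} (hX : IsConvexField X)
    (hdef : DefinedOver X H2) (hlip : LipschitzField k X) :
    ∃ p, p ∈ H2 ∧ (p, (0:V)) ∈ X := by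
  have hk' : (0:ℝ) < -k := by linarith
  set Pos := {s : ℝ | ∃ t z, (PP s t, z) ∈ X ∧ mink z (TT s t) = 0 ∧ 0 < mink z (NN s)}
    with hPosdef
  obtain ⟨t0, z0, hz0, hf0⟩ := level1_exists hk hX hdef hlip 0
  set h0 := mink z0 (NN 0) with hh0
  have hPne : Pos.Nonempty := by
    set s1 := -(2 + (2*|h0| + 2)/(-k)) with hs1
    obtain ⟨t1, z1, hz1, hf1⟩ := level1_exists hk hX hdef hlip s1
    have hdiv : (0:ℝ) ≤ (2*|h0|+2)/(-k) := by positivity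
    have cond : -((-k) * (0 - s1)) / 2 < h0 := by
      have e1 : (-k) * ((2*|h0|+2)/(-k)) = 2*|h0|+2 := by
        rw [mul_comm]; exact div_mul_cancel₀ _ (ne_of_gt hk')
      have e2 : 0 - s1 = 2 + (2*|h0|+2)/(-k) := by rw [hs1]; ring
      rw [e2, mul_add, e1]
      nlinarith [neg_abs_le h0]
    have hs1lt : s1 + 2 ≤ 0 := by rw [hs1]; linarith
    have := star_far' hk hX hlip hs1lt hz1 hz0 hf1 hf0 cond
    exact ⟨s1, t1, z1, hz1, hf1, this⟩
  have hPbdd : BddAbove Pos := by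
    refine ⟨max 2 (2*h0/(-k)) + 1, fun s' hs' => ?_⟩
    by_contra hcon
    push_neg at hcon
    obtain ⟨t', z', hz', hf', hpos'⟩ := hs'
    have h2 : (0:ℝ) + 2 ≤ s' := by
      have := le_max_left 2 (2*h0/(-k)); linarith
    have hsm : h0 < (-k) * (s' - 0) / 2 := by
      have h3 : 2*h0/(-k) < s' := by
        have := le_max_right 2 (2*h0/(-k)); linarith
      rw [div_lt_iff₀ hk'] at h3
      rw [sub_zero]
      nlinarith
    have := star_far hk hX hlip h2 hz0 hz' hf0 hf' hsm
    linarith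
  set sstar := sSup Pos with hsstar
  have hlow : ∀ s, s < sstar → ∀ t z, (PP s t, z) ∈ X → mink z (TT s t) = 0
      → 0 < mink z (NN s) := by
    intro s hs t z hz hf
    obtain ⟨s'', hs'', hlt⟩ := exists_lt_of_lt_csSup hPne hs
    obtain ⟨t'', z'', hz'', hf'', hp''⟩ := hs''
    exact star_pos hk hX hlip hlt hz hz'' hf hf'' hp''.le
  have hhigh : ∀ s, sstar < s → ∀ t z, (PP s t, z) ∈ X → mink z (TT s t) = 0
      → mink z (NN s) ≤ 0 := by
    intro s hs t z hz hf
    by_contra hcon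
    push_neg at hcon
    have hmem : s ∈ Pos := ⟨t, z, hz, hf, hcon⟩
    have := le_csSup hPbdd hmem
    linarith
  have hposn : ∀ n : ℕ, (0:ℝ) < 1/(n+1) := fun n => by positivity
  have h1n : Tendsto (fun n : ℕ => 1/((n:ℝ)+1)) atTop (nhds 0) :=
    tendsto_one_div_add_atTop_nhds_zero_nat
  -- left
  have hchL : ∀ n : ℕ, ∃ t z, (PP (sstar - 1/(n+1)) t, z) ∈ X
      ∧ mink z (TT (sstar - 1/(n+1)) t) = 0 := fun n => level1_exists hk hX hdef hlip _
  choose tL zL hzL hfL using hchL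
  have hposL : ∀ n, 0 < mink (zL n) (NN (sstar - 1/(n+1))) :=
    fun n => hlow _ (by linarith [hposn n]) _ _ (hzL n) (hfL n)
  have hsL : Tendsto (fun n : ℕ => sstar - 1/(n+1)) atTop (nhds sstar) := by
    simpa using (tendsto_const_nhds (x := sstar)).sub h1n
  obtain ⟨tA, zA, hzAmem, hfA, φA, hφA, hconvA⟩ := approach hk hX hdef hlip hsL hzL hfL
  have hNA : 0 ≤ mink zA (NN sstar) := ge_of_tendsto' hconvA (fun n => (hposL (φA n)).le)
  -- right
  have hchR : ∀ n : ℕ, ∃ t z, (PP (sstar + 1/(n+1)) t, z) ∈ X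
      ∧ mink z (TT (sstar + 1/(n+1)) t) = 0 := fun n => level1_exists hk hX hdef hlip _
  choose tR zR hzR hfR using hchR
  have hnegR : ∀ n, mink (zR n) (NN (sstar + 1/(n+1))) ≤ 0 :=
    fun n => hhigh _ (by linarith [hposn n]) _ _ (hzR n) (hfR n)
  have hsR : Tendsto (fun n : ℕ => sstar + 1/(n+1)) atTop (nhds sstar) := by
    simpa using (tendsto_const_nhds (x := sstar)).add h1n
  obtain ⟨tB, zB, hzBmem, hfB, φB, hφB, hconvB⟩ := approach hk hX hdef hlip hsR hzR hfR
  have hNB : mink zB (NN sstar) ≤ 0 := le_of_tendsto' hconvB (fun n => hnegR (φB n))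
  have hteq : tB = tA := level1_unique hk hX hlip hzBmem hfB hzAmem hfA
  rw [hteq] at hzBmem hfB
  -- combine
  rcases eq_or_lt_of_le hNA with h1 | h1
  · have hz0' : zA = 0 := zero_of_comps hX hzAmem hfA h1.symm
    rw [hz0'] at hzAmem
    exact ⟨PP sstar tA, PP_mem_H2 _ _, hzAmem⟩
  rcases eq_or_lt_of_le hNB with h2 | h2
  · have hz0' : zB = 0 := zero_of_comps hX hzBmem hfB h2
    rw [hz0'] at hzBmem
    exact ⟨PP sstar tA, PP_mem_H2 _ _, hzBmem⟩
  set c1 := mink zA (NN sstar) with hc1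
  set c2 := mink zB (NN sstar) with hc2
  have hconv := hX.2.2 (PP sstar tA)
  set lam := c1/(c1 - c2) with hlam
  have hden : 0 < c1 - c2 := by linarith
  have hl1 : 0 ≤ 1 - lam := by
    rw [hlam]
    have : c1/(c1-c2) ≤ 1 := by rw [div_le_one hden]; linarith
    linarith
  have hl2 : 0 ≤ lam := by positivity
  have hzmem : ((1-lam) • zA + lam • zB) ∈ {x : V | (PP sstar tA, x) ∈ X} :=
    hconv hzAmem hzBmem hl1 hl2 (by ring)
  have hTc : mink ((1-lam) • zA + lam • zB) (TT sstar tA) = 0 := by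
    rw [mink_lin_left, hfA, hfB]; ring
  have hNc : mink ((1-lam) • zA + lam • zB) (NN sstar) = 0 := by
    rw [mink_lin_left, ← hc1, ← hc2, hlam]
    field_simp
    ring
  have hz0' : ((1-lam) • zA + lam • zB) = 0 := zero_of_comps hX hzmem hTc hNc
  rw [hz0'] at hzmem
  exact ⟨PP sstar tA, PP_mem_H2 _ _, hzmem⟩

/-- Proposition 3.3: a `k`-lipschitz convex field with `k < 0`, defined over
all of `ℍ²`, has a unique zero. -/
theorem statement8 (k : ℝ) (hk : k < 0) (X : Set (V × V)) (hX : IsConvexField X)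
    (hdef : DefinedOver X H2) (hlip : LipschitzField k X) :
    ∃! p : V, p ∈ H2 ∧ (p, (0 : V)) ∈ X := by
  obtain ⟨p, hp, hmem⟩ := exists_zero hk hX hdef hlip
  refine ⟨p, ⟨hp, hmem⟩, ?_⟩
  rintro p' ⟨hp', hmem'⟩
  by_contra hne
  have hA := lemA hX hlip hmem' hmem hne
  have hpos := lemA_pos hk hp' hp hne
  have h0 : mink (0:V) p = 0 := by simp [mink]
  have h0' : mink p' (0:V) = 0 := by simp [mink]
  rw [h0, h0'] at hA
  linarith
end
end
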